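/- arXiv:2512.12969 — 2 statements merged into one kernel-verified Lean document; each statement's English description precedes it below -/
import Mathlib

section
/- Let N be a binary normal network on X with reticulated cherry {a,b} (reticulation leaf b), and let g_b be the grandparent of b not equal to the parent of a. If N displays bx|y but does not display ax|y, where x, y are in X - (V_{g_b} ∪ {a,b}), then N displays cx|y for all c in V_{g_b}. -/
/-- A (candidate) rooted phylogenetic network structure: a directed graph on a
vertex type `V` with a distinguished root and a labelling of (intended) leaves
by elements of `X`.  The combinatorial axioms are imposed by predicates below. -/
structure Network (X : Type) where
  V : Type
  arc : V → V → Prop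
  root : V
  leaf : X → V

namespace Network

variable {X : Type} (N : Network X)

def parents (v : N.V) : Set N.V := {u | N.arc u v}

def children (u : N.V) : Set N.V := {v | N.arc u v}

/-- in-degree 1, out-degree 2 -/
def IsTreeVertex (v : N.V) : Prop := (N.parents v).ncard = 1 ∧ (N.children v).ncard = 2

/-- in-degree 2, out-degree 1 -/
def IsRetic (v : N.V) : Prop := (N.parents v).ncard = 2 ∧ (N.children v).ncard = 1

/-- in-degree 1, out-degree 0 -/
def IsLeafVertex (v : N.V) : Prop := (N.parents v).ncard = 1 ∧ (N.children v).ncard = 0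

def Acyclic : Prop := ∀ v : N.V, ¬ Relation.TransGen N.arc v v

/-- A well-formed binary phylogenetic network (non-degenerate case): a finite
acyclic digraph with a root of in-degree 0 and out-degree 2, leaves of
in-degree 1 and out-degree 0 bijectively labelled by `X`, and all remaining
vertices tree vertices or reticulations. -/
def Wf : Prop :=
  Finite N.V ∧ N.Acyclic ∧
  (N.parents N.root).ncard = 0 ∧ (N.children N.root).ncard = 2 ∧
  Function.Injective N.leaf ∧
  (∀ x : X, N.IsLeafVertex (N.leaf x)) ∧
  (∀ v : N.V, v = N.root ∨ (∃ x, N.leaf x = v) ∨ N.IsTreeVertex v ∨ N.IsRetic v)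

/-- The degenerate network on a single leaf: one vertex, no arcs. -/
def Degenerate : Prop :=
  (∀ v : N.V, v = N.root) ∧ (∀ u v : N.V, ¬ N.arc u v) ∧
  (∃! _x : X, True) ∧ (∀ x : X, N.leaf x = N.root)

def IsBinaryPhylo : Prop := N.Wf ∨ N.Degenerate

/-- `l` is a directed path (a list of successively adjacent vertices) from `u` to `v`. -/
def IsPathFromTo (l : List N.V) (u v : N.V) : Prop :=
  l.Chain' N.arc ∧ l.head? = some u ∧ l.getLast? = some v

/-- `v` is a descendant of `u` (equivalently, `u` is an ancestor of `v`). -/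
def Desc (u v : N.V) : Prop := Relation.ReflTransGen N.arc u v

/-- The visibility set of `u`: those leaf labels `x` such that every directed
path from the root to the leaf labelled `x` traverses `u`. -/
def visSet (u : N.V) : Set X :=
  {x | ∀ l : List N.V, N.IsPathFromTo l N.root (N.leaf x) → u ∈ l}

/-- The cluster set of `u`: leaf labels of leaves that are descendants of `u`. -/
def cluster (u : N.V) : Set X := {x | N.Desc u (N.leaf x)}

/-- A tree path from `u` to `t`: a directed path whose vertices other than the
endpoints are tree vertices. -/
def IsTreePath (l : List N.V) (u t : N.V) : Prop :=
  N.IsPathFromTo l u t ∧ ∀ v ∈ l, v ≠ u → v ≠ t → N.IsTreeVertex v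

/-- Tree-child: every vertex with a child has a child that is a tree vertex or a leaf. -/
def TreeChild : Prop :=
  ∀ v : N.V, (∃ c, N.arc v c) → ∃ c, N.arc v c ∧ (N.IsTreeVertex c ∨ N.IsLeafVertex c)

/-- Some reticulation arc `(u,v)` is a shortcut: there is a directed path from
`u` to `v` avoiding the arc `(u,v)`. -/
def HasShortcut : Prop :=
  ∃ u v, N.arc u v ∧ N.IsRetic v ∧ ∃ w, N.arc u w ∧ w ≠ v ∧ N.Desc w v

/-- Normal: tree-child with no shortcuts. -/
def IsNormal : Prop := N.TreeChild ∧ ¬ N.HasShortcut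

def SiblingRetics (u v : N.V) : Prop :=
  u ≠ v ∧ N.IsRetic u ∧ N.IsRetic v ∧ ∃ p, N.arc p u ∧ N.arc p v

def StackRetics (u v : N.V) : Prop :=
  N.IsRetic u ∧ N.IsRetic v ∧ N.arc u v

/-- `u` and `v` are near-sibling reticulations: some tree vertex `t` has as its
two children `v` and a tree vertex `s` that is a parent of `u`. -/
def NearSiblingRetics (u v : N.V) : Prop :=
  u ≠ v ∧ N.IsRetic u ∧ N.IsRetic v ∧
  ∃ t s, N.IsTreeVertex t ∧ N.IsTreeVertex s ∧ N.arc t s ∧ N.arc t v ∧ N.arc s u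

/-- `u` and `v` are near-stack reticulations: the child of `u` is a tree vertex
that is a parent of `v`. -/
def NearStackRetics (u v : N.V) : Prop :=
  N.IsRetic u ∧ N.IsRetic v ∧ ∃ s, N.arc u s ∧ N.IsTreeVertex s ∧ N.arc s v

def NoNearRetics : Prop :=
  (∀ u v, ¬ N.NearSiblingRetics u v) ∧ (∀ u v, ¬ N.NearStackRetics u v)

/-- `{a,b}` is a cherry: the leaves labelled `a` and `b` share a parent. -/
def Cherry (a b : X) : Prop :=
  a ≠ b ∧ ∃ p, N.arc p (N.leaf a) ∧ N.arc p (N.leaf b)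

/-- `{a,b}` is a reticulated cherry with reticulation leaf `b`. -/
def ReticCherry (a b : X) : Prop :=
  a ≠ b ∧ ∃ pa pb, N.arc pa (N.leaf a) ∧ N.arc pb (N.leaf b) ∧
    N.IsRetic pb ∧ N.arc pa pb

/-- `N` displays the rooted triple `xy|z`: there is a subdigraph of `N` that
is a subdivision of the rooted triple tree with `z` adjacent to the root,
i.e. vertices `p` (the root image) and `q` (the image of the parent of `x,y`)
together with internally disjoint directed paths as below. -/
def Displays (x y z : X) : Prop :=
  x ≠ y ∧ x ≠ z ∧ y ≠ z ∧
  ∃ (p q : N.V) (l0 lx ly lz : List N.V),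
    p ≠ q ∧
    N.IsPathFromTo l0 p q ∧
    N.IsPathFromTo lx q (N.leaf x) ∧
    N.IsPathFromTo ly q (N.leaf y) ∧
    N.IsPathFromTo lz p (N.leaf z) ∧
    (∀ v ∈ lx, v ∈ ly → v = q) ∧
    (∀ v ∈ l0, v ∈ lx ∨ v ∈ ly → v = q) ∧
    (∀ v ∈ lz, v ∈ l0 ∨ v ∈ lx ∨ v ∈ ly → v = p)

/-- `R(N)`: the set of rooted triples displayed by `N`, encoded as ordered
triples `(x, y, z)` standing for `xy|z`. -/
def RDisp : Set (X × X × X) := {t | N.Displays t.1 t.2.1 t.2.2}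

/-- Isomorphism of networks on the same leaf set: a digraph isomorphism fixing
each leaf label. -/
def Isomorphic (N1 N2 : Network X) : Prop :=
  ∃ φ : N1.V ≃ N2.V,
    (∀ u v, N1.arc u v ↔ N2.arc (φ u) (φ v)) ∧ (∀ x, φ (N1.leaf x) = N2.leaf x)

/-- A candidate set for `b` (relative to `a`): a non-empty subset
`W ⊆ X - {a,b}` satisfying conditions (W1)–(W5). -/
def CandidateSet (a b : X) (W : Set X) : Prop :=
  W.Nonempty ∧ a ∉ W ∧ b ∉ W ∧
  -- (W1)
  (∀ c ∈ W, ∀ x : X, x ∉ W → x ≠ b →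
    N.Displays b c x ∧ ¬ N.Displays a c b) ∧
  -- (W2)
  (∀ c ∈ W, ∀ c' ∈ W, c ≠ c' → ¬ N.Displays b c c') ∧
  -- (W3)
  (∀ c ∈ W, ∀ x : X, x ∉ W → x ≠ a → x ≠ b →
    (N.Displays c x a ↔ N.Displays b x a)) ∧
  -- (W4)
  (∀ x y : X, x ∉ W → x ≠ a → x ≠ b → y ∉ W → y ≠ a → y ≠ b →
    N.Displays b x y → ¬ N.Displays a x y → ∀ c ∈ W, N.Displays c x y) ∧
  -- (W5)
  (∀ c ∈ W, (∀ x : X, x ∉ W → x ≠ a → x ≠ b → N.Displays a c x) →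
    ∀ x : X, x ∉ W → x ≠ a → x ≠ b → ¬ N.Displays a x c ∧ ¬ N.Displays a x b)

end Network

namespace Network
variable {X : Type} {N : Network X}

lemma chain'_transGen : ∀ {l : List N.V} {v w : N.V}, (v :: l).Chain' N.arc → w ∈ l →
    Relation.TransGen N.arc v w := by
  intro l
  induction l with
  | nil => intro v w _ hw; simp at hw
  | cons hd tl ih =>
    intro v w hc hw
    have harc : N.arc v hd := (List.isChain_cons_cons.mp hc).1
    rcases List.mem_cons.mp hw with rfl | hw
    · exact Relation.TransGen.single harc
    · exact Relation.TransGen.head harc (ih (List.isChain_cons_cons.mp hc).2 hw)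

lemma mem_cycle {l s t : List N.V} {v : N.V} (hc : l.Chain' N.arc) (hd : l = s ++ v :: t)
    (hv : v ∈ t) : Relation.TransGen N.arc v v :=
  chain'_transGen (hc.suffix ⟨s, hd.symm⟩) hv

lemma chain'_rtg : ∀ {l : List N.V} {u v : N.V}, l.Chain' N.arc → l.head? = some u →
    l.getLast? = some v → Relation.ReflTransGen N.arc u v := by
  intro l
  induction l with
  | nil => simp
  | cons hd tl ih =>
    intro u v hc hh hl
    simp only [List.head?_cons, Option.some.injEq] at hh
    subst hh
    cases tl with
    | nil => simp at hl; subst hl; exact .refl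
    | cons h2 t2 =>
      rw [List.getLast?_cons_cons] at hl
      exact Relation.ReflTransGen.head (List.isChain_cons_cons.mp hc).1
        (ih (List.isChain_cons_cons.mp hc).2 rfl hl)

lemma path_rtg {l : List N.V} {u v : N.V} (h : N.IsPathFromTo l u v) :
    Relation.ReflTransGen N.arc u v := chain'_rtg h.1 h.2.1 h.2.2

lemma path_ne_nil {l : List N.V} {u v : N.V} (h : N.IsPathFromTo l u v) : l ≠ [] := by
  rintro rfl; simp [IsPathFromTo] at h

lemma path_head_mem {l : List N.V} {u v : N.V} (h : N.IsPathFromTo l u v) : u ∈ l := by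
  cases l with
  | nil => simp [IsPathFromTo] at h
  | cons a t =>
    have := h.2.1; simp only [List.head?_cons, Option.some.injEq] at this
    subst this; exact List.mem_cons_self

lemma path_split {l l1 l2 : List N.V} {u v w : N.V} (h : N.IsPathFromTo l u v)
    (hd : l = l1 ++ w :: l2) :
    N.IsPathFromTo (l1 ++ [w]) u w ∧ N.IsPathFromTo (w :: l2) w v := by
  obtain ⟨hc, hh, hl⟩ := h
  subst hd
  constructor
  · refine ⟨hc.prefix ⟨l2, by simp⟩, ?_, by simp⟩
    rw [List.head?_append] at hh ⊢
    cases l1 <;> simpa using hh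
  · refine ⟨hc.suffix ⟨l1, rfl⟩, rfl, ?_⟩
    rw [List.getLast?_append] at hl
    cases h2 : (w :: l2).getLast? with
    | none => simp at h2
    | some z => rw [h2] at hl; simpa using hl

lemma path_append {l1 l2 : List N.V} {u v w : N.V} (h1 : N.IsPathFromTo l1 u v)
    (h2 : N.IsPathFromTo l2 v w) : N.IsPathFromTo (l1 ++ l2.tail) u w := by
  obtain ⟨hc1, hh1, hl1⟩ := h1
  obtain ⟨hc2, hh2, hl2⟩ := h2
  cases l2 with
  | nil => simp at hh2
  | cons h2h t2 =>
    simp only [List.head?_cons, Option.some.injEq] at hh2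
    subst hh2
    cases t2 with
    | nil =>
      simp only [List.getLast?_singleton, Option.some.injEq] at hl2
      subst hl2
      exact ⟨by simpa using hc1, by simpa using hh1, by simpa using hl1⟩
    | cons a t =>
      refine ⟨?_, ?_, ?_⟩
      · unfold List.Chain'; rw [List.isChain_append]
        refine ⟨hc1, hc2.tail, ?_⟩
        intro x hx y hy
        rw [hl1] at hx; simp only [Option.mem_def, Option.some.injEq] at hx
        simp only [List.tail_cons, List.head?_cons, Option.mem_def, Option.some.injEq] at hy
        subst hx; subst hy
        exact (List.isChain_cons_cons.mp hc2).1
      · rw [List.head?_append, hh1]; rfl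
      · rw [List.getLast?_cons_cons] at hl2
        simp only [List.tail_cons]
        rw [List.getLast?_append, hl2]; rfl

lemma path_mem_rtg {l : List N.V} {u v w : N.V} (h : N.IsPathFromTo l u v) (hw : w ∈ l) :
    Relation.ReflTransGen N.arc u w ∧ Relation.ReflTransGen N.arc w v := by
  obtain ⟨l1, l2, hd⟩ := List.append_of_mem hw
  obtain ⟨ha, hb⟩ := path_split h hd
  exact ⟨path_rtg ha, path_rtg hb⟩

lemma rtg_ne {α} {r : α → α → Prop} {a b : α} (h : Relation.ReflTransGen r a b) (hne : a ≠ b) :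
    Relation.TransGen r a b := by
  rcases h.cases_head with rfl | ⟨c, hc, hcb⟩
  · exact absurd rfl hne
  · exact Relation.TransGen.head' hc hcb

lemma last_split {α} (P : α → Prop) : ∀ (l : List α), (∃ w ∈ l, P w) →
    ∃ l1 w l2, l = l1 ++ w :: l2 ∧ P w ∧ ∀ z ∈ l2, ¬ P z := by
  intro l
  induction l with
  | nil => rintro ⟨w, hw, -⟩; simp at hw
  | cons hd tl ih =>
    intro hex
    by_cases h : ∃ w ∈ tl, P w
    · obtain ⟨l1, w, l2, heq, hw, hmax⟩ := ih h
      exact ⟨hd :: l1, w, l2, by simp [heq], hw, hmax⟩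
    · obtain ⟨w, hw, hPw⟩ := hex
      have hwhd : w = hd := by
        rcases List.mem_cons.mp hw with rfl | h'
        · rfl
        · exact absurd ⟨w, h', hPw⟩ h
      subst hwhd
      exact ⟨[], w, tl, rfl, hPw, fun z hz hP => h ⟨z, hz, hP⟩⟩

lemma path_decomp {l : List N.V} {u v : N.V} (h : N.IsPathFromTo l u v) (hne : u ≠ v) :
    ∃ l1 w, l = l1 ++ [w, v] ∧ N.IsPathFromTo (l1 ++ [w]) u w ∧ N.arc w v := by
  rcases List.eq_nil_or_concat l with rfl | ⟨l', a, hla⟩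
  · exact absurd rfl (path_ne_nil h)
  · rw [List.concat_eq_append] at hla
    subst hla
    have hav : a = v := by
      have := h.2.2
      rw [List.getLast?_append] at this
      simpa using this
    subst hav
    rcases List.eq_nil_or_concat l' with rfl | ⟨l'', w, hlw⟩
    · exfalso
      have := h.2.1
      simp only [List.nil_append, List.head?_cons, Option.some.injEq] at this
      exact hne this.symm
    · rw [List.concat_eq_append] at hlw
      subst hlw
      refine ⟨l'', w, by simp, ⟨h.1.prefix ⟨[a], by simp⟩, ?_, by simp⟩, ?_⟩
      · have := h.2.1
        rw [List.head?_append] at this ⊢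
        rw [List.head?_append] at this
        cases l'' <;> simpa using this
      · have hc := h.1
        unfold List.Chain' at hc; rw [List.isChain_append] at hc
        exact hc.2.2 w (by simp) a (by simp)

lemma mem_of_head? {l : List N.V} {a : N.V} (h : l.head? = some a) : a ∈ l := by
  cases l with
  | nil => simp at h
  | cons x t =>
    simp only [List.head?_cons, Option.some.injEq] at h
    subst h; exact List.mem_cons_self

lemma head?_cons_decomp {l : List N.V} {a : N.V} (h : l.head? = some a) :
    ∃ t, l = a :: t := by
  cases l with
  | nil => simp at h
  | cons x t =>
    simp only [List.head?_cons, Option.some.injEq] at h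
    exact ⟨t, by rw [h]⟩

lemma no_leaf_arc (hfin : Finite N.V) {v w : N.V} (hv : N.IsLeafVertex v) : ¬ N.arc v w := by
  intro harc
  have hfinset : (N.children v).Finite := Set.toFinite _
  have : N.children v = ∅ := (Set.ncard_eq_zero hfinset).mp hv.2
  exact absurd (this ▸ harc : w ∈ (∅ : Set N.V)) (Set.notMem_empty w)

lemma leaf_desc_eq (hfin : Finite N.V) {v t : N.V} (hv : N.IsLeafVertex v)
    (h : Relation.ReflTransGen N.arc v t) : t = v := by
  rcases h.cases_head with rfl | ⟨c, hc, -⟩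
  · rfl
  · exact absurd hc (no_leaf_arc hfin hv)

lemma parents_eq_of_ncard_one {v u u' : N.V} (h : (N.parents v).ncard = 1)
    (hu : N.arc u v) (hu' : N.arc u' v) : u = u' := by
  obtain ⟨a, ha⟩ := Set.ncard_eq_one.mp h
  have h1 : u ∈ N.parents v := hu
  have h2 : u' ∈ N.parents v := hu'
  rw [ha] at h1 h2
  simp at h1 h2; rw [h1, h2]

lemma parents_pair {v u1 u2 g : N.V} (hfin : Finite N.V) (h : (N.parents v).ncard = 2)
    (h1 : N.arc u1 v) (h2 : N.arc u2 v) (hne : u1 ≠ u2) (hg : N.arc g v) :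
    g = u1 ∨ g = u2 := by
  have hsub : ({u1, u2} : Set N.V) ⊆ N.parents v := by
    rintro z (rfl | rfl)
    · exact h1
    · exact h2
  have hcard : ({u1, u2} : Set N.V).ncard = 2 := Set.ncard_pair hne
  have heq : ({u1, u2} : Set N.V) = N.parents v :=
    Set.eq_of_subset_of_ncard_le hsub (by rw [h, hcard]) (Set.toFinite _)
  have : g ∈ ({u1, u2} : Set N.V) := heq ▸ (hg : g ∈ N.parents v)
  simpa using this


lemma transGen_head_decomp {α} {r : α → α → Prop} {a b : α} (h : Relation.ReflTransGen r a b)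
    (hne : a ≠ b) : ∃ c, r a c ∧ Relation.ReflTransGen r c b := by
  rcases h.cases_head with rfl | ⟨c, hc, hcb⟩
  · exact absurd rfl hne
  · exact ⟨c, hc, hcb⟩

lemma children_eq_of_ncard_one {v z z' : N.V} (h : (N.children v).ncard = 1)
    (hz : N.arc v z) (hz' : N.arc v z') : z = z' := by
  obtain ⟨a, ha⟩ := Set.ncard_eq_one.mp h
  have h1 : z ∈ N.children v := hz
  have h2 : z' ∈ N.children v := hz'
  rw [ha] at h1 h2
  simp at h1 h2; rw [h1, h2]

lemma exists_root_path (hfin : Finite N.V) (hac : N.Acyclic)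
    (htot : ∀ v : N.V, v = N.root ∨ (∃ x, N.leaf x = v) ∨ N.IsTreeVertex v ∨ N.IsRetic v)
    (hleaf : ∀ x : X, N.IsLeafVertex (N.leaf x)) (v : N.V) :
    ∃ l, N.IsPathFromTo l N.root v := by
  haveI := hfin
  have hwfd : WellFounded (Relation.TransGen N.arc) := by
    haveI : IsTrans N.V (Relation.TransGen N.arc) := ⟨fun a b c => Relation.TransGen.trans⟩
    haveI : IsIrrefl N.V (Relation.TransGen N.arc) := ⟨hac⟩
    exact Finite.wellFounded_of_trans_of_irrefl _
  induction v using hwfd.induction with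
  | _ v ih =>
  by_cases hv : v = N.root
  · subst hv
    exact ⟨[N.root], List.isChain_singleton _, rfl, rfl⟩
  · have hpar : (N.parents v).Nonempty := by
      have hne0 : (N.parents v).ncard ≠ 0 := by
        rcases htot v with rfl | ⟨x, rfl⟩ | ht | hrt
        · exact absurd rfl hv
        · rw [(hleaf x).1]; omega
        · rw [ht.1]; omega
        · rw [hrt.1]; omega
      exact Set.nonempty_of_ncard_ne_zero hne0
    obtain ⟨u, hu⟩ := hpar
    obtain ⟨l, hl⟩ := ih u (Relation.TransGen.single hu)
    have hpath2 : N.IsPathFromTo [u, v] u v := ⟨List.isChain_pair.mpr hu, rfl, rfl⟩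
    exact ⟨l ++ [v], path_append hl hpath2⟩

end Network

/-- Lemma (v): for a reticulated cherry `{a,b}` with reticulation leaf `b` in
a binary normal network `N`, with `g_b` the grandparent of `b` other than the
parent `p_a` of `a`: if `N` displays `bx|y` but not `ax|y`, where
`x, y ∈ X - (V_{g_b} ∪ {a,b})`, then `N` displays `cx|y` for all `c ∈ V_{g_b}`. -/
theorem vgb_property_v {X : Type} (N : Network X)
    (h : N.IsBinaryPhylo) (hn : N.IsNormal) (a b : X) (hab : a ≠ b)
    (pa pb gb : N.V)
    (hpa : N.arc pa (N.leaf a)) (hpb : N.arc pb (N.leaf b))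
    (hretic : N.IsRetic pb) (hpapb : N.arc pa pb) (hgbpb : N.arc gb pb)
    (hgbpa : gb ≠ pa) :
    ∀ x y : X, x ∉ N.visSet gb → x ≠ a → x ≠ b →
      y ∉ N.visSet gb → y ≠ a → y ≠ b →
      N.Displays b x y → ¬ N.Displays a x y →
      ∀ c ∈ N.visSet gb, N.Displays c x y := by
  intro x y hx hxa hxb hy hya hyb hdisp hnotax c hc
  have hwf : N.Wf := by
    rcases h with hwf | hdeg
    · exact hwf
    · exfalso
      obtain ⟨-, -, ⟨x0, -, huniq⟩, -⟩ := hdeg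
      exact absurd ((huniq b trivial).trans (huniq x trivial).symm) hdisp.1
  obtain ⟨hfin, hac, hroot0, hroot2, hinj, hleafvert, htot⟩ := hwf
  haveI := hfin
  obtain ⟨hbx, hby, hxy, p, q, l0, lx, ly, lz, hpq, h0, hxP, hyP, hzP, dxy, d0, dz⟩ := hdisp
  have hcx : c ≠ x := fun e => hx (e ▸ hc)
  have hcy : c ≠ y := fun e => hy (e ▸ hc)
  have hnoc : ∀ v : N.V, ¬ Relation.TransGen N.arc v v := hac
  have hrtg_pq : Relation.ReflTransGen N.arc p q := Network.path_rtg h0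
  have hTpq : Relation.TransGen N.arc p q := Network.rtg_ne hrtg_pq hpq
  have hqlb : q ≠ N.leaf b := by
    intro e
    exact hxb (hinj (Network.leaf_desc_eq hfin (hleafvert b) (e ▸ Network.path_rtg hyP)))
  obtain ⟨m1, w1, hlx1, hpath1, harc1⟩ := Network.path_decomp hxP hqlb
  have hw1 : w1 = pb := Network.parents_eq_of_ncard_one (hleafvert b).1 harc1 hpb
  rw [hw1] at hlx1 hpath1 harc1
  have hqpb : q ≠ pb := by
    intro e
    have hpbx : pb ≠ N.leaf x := by
      intro e2
      have h1 := hretic.2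
      rw [e2, (hleafvert x).2] at h1
      exact absurd h1 (by norm_num)
    obtain ⟨z, hz, hzx⟩ :=
      Network.transGen_head_decomp (e ▸ Network.path_rtg hyP) hpbx
    have hzb : z = N.leaf b := Network.children_eq_of_ncard_one hretic.2 hz hpb
    rw [hzb] at hzx
    exact hxb (hinj (Network.leaf_desc_eq hfin (hleafvert b) hzx))
  obtain ⟨m2, g, hlx2, hpath2, harc2⟩ := Network.path_decomp hpath1 hqpb
  have hlx : lx = m2 ++ [g, pb, N.leaf b] := by
    have h5 : m1 ++ [pb] ++ [N.leaf b] = m2 ++ [g, pb] ++ [N.leaf b] := by rw [hlx2]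
    rw [hlx1]
    simp only [List.append_assoc] at h5 ⊢
    simpa using h5
  have hg : g = pa ∨ g = gb :=
    Network.parents_pair hfin hretic.1 hpapb hgbpb (Ne.symm hgbpa) harc2
  rcases hg with hgpa | hggb
  · -- g = pa : contradiction with hnotax
    rw [hgpa] at hlx hpath2 harc2
    exfalso
    apply hnotax
    have hlanly : N.leaf a ∉ ly := fun hmem =>
      hxa (hinj (Network.leaf_desc_eq hfin (hleafvert a) (Network.path_mem_rtg hyP hmem).2))
    have hlanl0 : N.leaf a ∉ l0 := by
      intro hmem
      have h2 : q = N.leaf a :=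
        Network.leaf_desc_eq hfin (hleafvert a) (Network.path_mem_rtg h0 hmem).2
      have h3 : Relation.ReflTransGen N.arc q pa := Network.path_rtg hpath2
      rw [h2] at h3
      have h4 : pa = N.leaf a := Network.leaf_desc_eq hfin (hleafvert a) h3
      exact Network.no_leaf_arc hfin (hleafvert a) (h4 ▸ hpapb)
    have hlanlz : N.leaf a ∉ lz := fun hmem =>
      hya (hinj (Network.leaf_desc_eq hfin (hleafvert a) (Network.path_mem_rtg hzP hmem).2))
    have hsub : ∀ v, v ∈ m2 ++ [pa] → v ∈ lx := by
      intro v hv; rw [hlx]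
      rcases List.mem_append.mp hv with h' | h'
      · exact List.mem_append.mpr (Or.inl h')
      · simp at h'; subst h'; simp
    refine ⟨Ne.symm hxa, Ne.symm hya, hxy, p, q, l0, m2 ++ [pa, N.leaf a], ly, lz,
      hpq, h0, ?_, hyP, hzP, ?_, ?_, ?_⟩
    · have hstep : N.IsPathFromTo [pa, N.leaf a] pa (N.leaf a) :=
        ⟨List.isChain_pair.mpr hpa, rfl, rfl⟩
      have := Network.path_append hpath2 hstep
      simpa using this
    · intro v hv hvly
      rcases List.mem_append.mp hv with h' | h'
      · exact dxy v (hsub v (List.mem_append.mpr (Or.inl h'))) hvly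
      · rcases List.mem_cons.mp h' with rfl | h'
        · exact dxy v (hsub v (by simp)) hvly
        · simp at h'; subst h'; exact absurd hvly hlanly
    · intro v hvl0 hvor
      rcases hvor with hv | hv
      · rcases List.mem_append.mp hv with h' | h'
        · exact d0 v hvl0 (Or.inl (hsub v (List.mem_append.mpr (Or.inl h'))))
        · rcases List.mem_cons.mp h' with rfl | h'
          · exact d0 v hvl0 (Or.inl (hsub v (by simp)))
          · simp at h'; subst h'; exact absurd hvl0 hlanl0
      · exact d0 v hvl0 (Or.inr hv)
    · intro v hvlz hvor
      rcases hvor with hv | hv | hv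
      · exact dz v hvlz (Or.inl hv)
      · rcases List.mem_append.mp hv with h' | h'
        · exact dz v hvlz (Or.inr (Or.inl (hsub v (List.mem_append.mpr (Or.inl h')))))
        · rcases List.mem_cons.mp h' with rfl | h'
          · exact dz v hvlz (Or.inr (Or.inl (hsub v (by simp))))
          · simp at h'; subst h'; exact absurd hvlz hlanlz
      · exact dz v hvlz (Or.inr (Or.inr hv))
  · -- g = gb
    rw [hggb] at hlx hpath2 harc2
    have hgblx : gb ∈ lx := by rw [hlx]; simp
    have hrtg_qgb : Relation.ReflTransGen N.arc q gb := Network.path_rtg hpath2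
    have hpgb : p ≠ gb := by
      intro e
      exact hnoc p (hTpq.trans_left (e ▸ hrtg_qgb))
    obtain ⟨π, hπ⟩ := Network.exists_root_path hfin hac htot hleafvert (N.leaf c)
    have hgbπ : gb ∈ π := hc π hπ
    obtain ⟨π1, π2, hπd⟩ := List.append_of_mem hgbπ
    have hρ : N.IsPathFromTo (gb :: π2) gb (N.leaf c) := (Network.path_split hπ hπd).2
    have hTgw : ∀ w ∈ π2, Relation.TransGen N.arc gb w := fun w hw =>
      Network.chain'_transGen hρ.1 hw
    have hK : ∀ w ∈ π2, ∀ σ, N.IsPathFromTo σ N.root w → gb ∈ σ := by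
      intro w hw σ hσ
      by_contra hgbσ
      obtain ⟨s, t, hst⟩ := List.append_of_mem (List.mem_cons_of_mem gb hw : w ∈ gb :: π2)
      have hwt : N.IsPathFromTo (w :: t) w (N.leaf c) := (Network.path_split hρ hst).2
      have hσ' : N.IsPathFromTo (σ ++ t) N.root (N.leaf c) := by
        have := Network.path_append hσ hwt
        simpa using this
      rcases List.mem_append.mp (hc _ hσ') with h' | h'
      · exact hgbσ h'
      · cases s with
        | nil =>
          simp only [List.nil_append, List.cons.injEq] at hst
          obtain ⟨rfl, rfl⟩ := hst
          exact hnoc gb (hTgw _ hw)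
        | cons s0 s' =>
          simp only [List.cons_append, List.cons.injEq] at hst
          obtain ⟨rfl, hπ2⟩ := hst
          have hmem2 : gb ∈ π2 := by
            rw [hπ2]; exact List.mem_append.mpr (Or.inr (List.mem_cons_of_mem _ h'))
          exact hnoc gb (hTgw gb hmem2)
    have hdisj0 : ∀ w ∈ π2, w ∉ l0 := by
      intro w hw hwl0
      exact hnoc gb ((hTgw w hw).trans_left
        (((Network.path_mem_rtg h0 hwl0).2).trans hrtg_qgb))
    obtain ⟨σ0, hσ0⟩ := Network.exists_root_path hfin hac htot hleafvert p
    have hdisjz : ∀ w ∈ π2, w ∉ lz := by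
      intro w hw hwlz
      obtain ⟨z1, z2, hzd⟩ := List.append_of_mem hwlz
      have hz1 : N.IsPathFromTo (z1 ++ [w]) p w := (Network.path_split hzP hzd).1
      have hσ' : N.IsPathFromTo (σ0 ++ (z1 ++ [w]).tail) N.root w :=
        Network.path_append hσ0 hz1
      rcases List.mem_append.mp (hK w hw _ hσ') with h' | h'
      · have h1 : Relation.ReflTransGen N.arc gb p := (Network.path_mem_rtg hσ0 h').2
        exact hnoc gb (Relation.TransGen.trans_right h1 (hTpq.trans_left hrtg_qgb))
      · have hgblz : gb ∈ lz := by
          have h'' := List.tail_subset _ h'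
          rcases List.mem_append.mp h'' with h3 | h3
          · rw [hzd]; exact List.mem_append.mpr (Or.inl h3)
          · simp at h3; subst h3; exact hwlz
        exact hpgb (dz gb hgblz (Or.inr (Or.inl hgblx))).symm
    by_cases hqgb : q = gb
    · subst hqgb
      have hgbly : q ∈ ly := Network.mem_of_head? hyP.2.1
      obtain ⟨ρ1, w', ρ2, hρd, hw'ly, hmax⟩ :=
        Network.last_split (· ∈ ly) (q :: π2) ⟨q, List.mem_cons_self, hgbly⟩
      have hρ2π2 : ρ2 ⊆ π2 := by
        cases ρ1 with
        | nil =>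
          simp only [List.nil_append, List.cons.injEq] at hρd
          obtain ⟨rfl, rfl⟩ := hρd
          exact fun z hz => hz
        | cons r0 r' =>
          simp only [List.cons_append, List.cons.injEq] at hρd
          obtain ⟨rfl, h2⟩ := hρd
          rw [h2]; intro z hz
          exact List.mem_append.mpr (Or.inr (List.mem_cons_of_mem _ hz))
      have hlx'' : N.IsPathFromTo (w' :: ρ2) w' (N.leaf c) := (Network.path_split hρ hρd).2
      obtain ⟨ly1, ly2, hlyd⟩ := List.append_of_mem hw'ly
      have hs : N.IsPathFromTo (ly1 ++ [w']) q w' := (Network.path_split hyP hlyd).1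
      have hly'' : N.IsPathFromTo (w' :: ly2) w' (N.leaf x) := (Network.path_split hyP hlyd).2
      have hl0'' : N.IsPathFromTo (l0 ++ (ly1 ++ [w']).tail) p w' := Network.path_append h0 hs
      have hly2ly : ly2 ⊆ ly := by
        rw [hlyd]; intro z hz
        exact List.mem_append.mpr (Or.inr (List.mem_cons_of_mem _ hz))
      have hly1ly : ly1 ⊆ ly := by
        rw [hlyd]; intro z hz; exact List.mem_append.mpr (Or.inl hz)
      have hgbnly2 : q ∉ ly2 := by
        intro hmem
        obtain ⟨t', hly⟩ := Network.head?_cons_decomp hyP.2.1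
        have hgbt' : q ∈ t' := by
          cases ly1 with
          | nil =>
            rw [hly] at hlyd
            simp only [List.nil_append, List.cons.injEq] at hlyd
            obtain ⟨rfl, rfl⟩ := hlyd
            exact hmem
          | cons a0 r =>
            rw [hly] at hlyd
            simp only [List.cons_append, List.cons.injEq] at hlyd
            obtain ⟨rfl, h2⟩ := hlyd
            rw [h2]
            exact List.mem_append.mpr (Or.inr (List.mem_cons_of_mem _ hmem))
        exact hnoc q (Network.mem_cycle hyP.1 (show ly = [] ++ q :: t' by simpa using hly) hgbt')
      have hdup : ∀ z, z ∈ ly1 → z ∈ ly2 → False := by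
        intro z hz1 hz2
        obtain ⟨s1, t1, hs1⟩ := List.append_of_mem hz1
        have hd2 : ly = s1 ++ z :: (t1 ++ w' :: ly2) := by rw [hlyd, hs1]; simp
        exact hnoc z (Network.mem_cycle hyP.1 hd2
          (List.mem_append.mpr (Or.inr (List.mem_cons_of_mem _ hz2))))
      have hw'nly1 : w' ∉ ly1 := by
        intro hmem
        obtain ⟨s1, t1, hs1⟩ := List.append_of_mem hmem
        have hd2 : ly = s1 ++ w' :: (t1 ++ w' :: ly2) := by rw [hlyd, hs1]; simp
        exact hnoc w' (Network.mem_cycle hyP.1 hd2 (by simp))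
      have hpw' : p ≠ w' := by
        intro e
        exact hpq (d0 p (Network.path_head_mem h0) (Or.inr (e ▸ hw'ly)))
      refine ⟨hcx, hcy, hxy, p, w', l0 ++ (ly1 ++ [w']).tail, w' :: ρ2, w' :: ly2, lz,
        hpw', hl0'', hlx'', hly'', hzP, ?_, ?_, ?_⟩
      · intro v hv hv2
        rcases List.mem_cons.mp hv with rfl | hv
        · rfl
        rcases List.mem_cons.mp hv2 with rfl | hv2
        · rfl
        exact absurd (hly2ly hv2) (hmax v hv)
      · intro v hv hvor
        have hvcase : v ∈ l0 ∨ v ∈ ly1 ∨ v = w' := by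
          rcases List.mem_append.mp hv with h' | h'
          · exact Or.inl h'
          · rcases List.mem_append.mp (List.tail_subset _ h') with h'' | h''
            · exact Or.inr (Or.inl h'')
            · simp at h''; exact Or.inr (Or.inr h'')
        rcases hvcase with hvl0 | hvly1 | rfl
        · rcases hvor with hvx | hvy
          · rcases List.mem_cons.mp hvx with rfl | hvx
            · rfl
            · exact absurd hvl0 (hdisj0 v (hρ2π2 hvx))
          · rcases List.mem_cons.mp hvy with rfl | hvy
            · rfl
            · have hvq := d0 v hvl0 (Or.inr (hly2ly hvy))
              exact absurd (hvq ▸ hvy) hgbnly2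
        · rcases hvor with hvx | hvy
          · rcases List.mem_cons.mp hvx with rfl | hvx
            · rfl
            · exact absurd (hly1ly hvly1) (hmax v hvx)
          · rcases List.mem_cons.mp hvy with rfl | hvy
            · rfl
            · exact (hdup v hvly1 hvy).elim
        · rfl
      · intro v hvlz hvor
        rcases hvor with hv | hv | hv
        · rcases List.mem_append.mp hv with h' | h'
          · exact dz v hvlz (Or.inl h')
          · have hvly : v ∈ ly := by
              rcases List.mem_append.mp (List.tail_subset _ h') with h'' | h''
              · exact hly1ly h''
              · simp at h''; exact h'' ▸ hw'ly
            exact dz v hvlz (Or.inr (Or.inr hvly))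
        · rcases List.mem_cons.mp hv with rfl | hv
          · exact dz v hvlz (Or.inr (Or.inr hw'ly))
          · exact absurd hvlz (hdisjz v (hρ2π2 hv))
        · have hvly : v ∈ ly := by
            rcases List.mem_cons.mp hv with rfl | hv
            · exact hw'ly
            · exact hly2ly hv
          exact dz v hvlz (Or.inr (Or.inr hvly))
    · -- q ≠ gb
      have hdisjy : ∀ w ∈ π2, w ∉ ly := by
        intro w hw hwly
        obtain ⟨y1, y2, hyd⟩ := List.append_of_mem hwly
        have hy1 : N.IsPathFromTo (y1 ++ [w]) q w := (Network.path_split hyP hyd).1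
        obtain ⟨σ1, hσ1⟩ := Network.exists_root_path hfin hac htot hleafvert q
        have hσ' : N.IsPathFromTo (σ1 ++ (y1 ++ [w]).tail) N.root w :=
          Network.path_append hσ1 hy1
        rcases List.mem_append.mp (hK w hw _ hσ') with h' | h'
        · have h1 : Relation.ReflTransGen N.arc gb q := (Network.path_mem_rtg hσ1 h').2
          exact hnoc gb ((Network.rtg_ne h1 (fun e => hqgb e.symm)).trans_left hrtg_qgb)
        · have hgbly : gb ∈ ly := by
            rcases List.mem_append.mp (List.tail_subset _ h') with h'' | h''
            · rw [hyd]; exact List.mem_append.mpr (Or.inl h'')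
            · simp at h''; exact h'' ▸ hwly
          exact hqgb (dxy gb hgblx hgbly).symm
      have hlx' : N.IsPathFromTo (m2 ++ gb :: π2) q (N.leaf c) := by
        have := Network.path_append hpath2 hρ
        simpa using this
      have hsub : ∀ v, v ∈ m2 ++ [gb] → v ∈ lx := by
        intro v hv; rw [hlx]
        rcases List.mem_append.mp hv with h' | h'
        · exact List.mem_append.mpr (Or.inl h')
        · simp at h'; subst h'; simp
      refine ⟨hcx, hcy, hxy, p, q, l0, m2 ++ gb :: π2, ly, lz, hpq, h0, hlx', hyP, hzP,
        ?_, ?_, ?_⟩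
      · intro v hv hvly
        rcases List.mem_append.mp hv with h' | h'
        · exact dxy v (hsub v (List.mem_append.mpr (Or.inl h'))) hvly
        · rcases List.mem_cons.mp h' with rfl | h'
          · exact dxy v (hsub v (by simp)) hvly
          · exact absurd hvly (hdisjy v h')
      · intro v hvl0 hvor
        rcases hvor with hv | hv
        · rcases List.mem_append.mp hv with h' | h'
          · exact d0 v hvl0 (Or.inl (hsub v (List.mem_append.mpr (Or.inl h'))))
          · rcases List.mem_cons.mp h' with rfl | h'
            · exact d0 v hvl0 (Or.inl (hsub v (by simp)))
            · exact absurd hvl0 (hdisj0 v h')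
        · exact d0 v hvl0 (Or.inr hv)
      · intro v hvlz hvor
        rcases hvor with hv | hv | hv
        · exact dz v hvlz (Or.inl hv)
        · rcases List.mem_append.mp hv with h' | h'
          · exact dz v hvlz (Or.inr (Or.inl (hsub v (List.mem_append.mpr (Or.inl h')))))
          · rcases List.mem_cons.mp h' with rfl | h'
            · exact dz v hvlz (Or.inr (Or.inl (hsub v (by simp))))
            · exact absurd hvlz (hdisjz v h')
        · exact dz v hvlz (Or.inr (Or.inr hv))
end

section
/- Let N be a binary normal network on X and let a, b be distinct elements of X. Then {a,b} is a cherry of N if and only if for every rooted triple xy|z displayed by N with a, b ∈ {x,y,z}, we have {a,b} = {x,y}. -/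
namespace Network

variable {X : Type} {N : Network X}

lemma path_last_mem {l : List N.V} {u v : N.V} (h : N.IsPathFromTo l u v) : v ∈ l := by
  obtain ⟨-, -, h3⟩ := h
  exact List.mem_of_mem_getLast? h3

lemma path_singleton (u : N.V) : N.IsPathFromTo [u] u u := by
  constructor
  · exact List.isChain_singleton _
  · simp

lemma path_cons {l : List N.V} {u v w : N.V} (ha : N.arc u v) (h : N.IsPathFromTo l v w) :
    N.IsPathFromTo (u :: l) u w := by
  obtain ⟨h1, h2, h3⟩ := h
  refine ⟨?_, ?_, ?_⟩
  · simp only [List.Chain']; rw [List.isChain_cons]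
    exact ⟨fun y hy => by rw [h2] at hy; cases hy; exact ha, h1⟩
  · simp
  · rw [List.getLast?_cons, h3]
    · simp [Option.or]
    

lemma path_snoc {l : List N.V} {u v w : N.V} (h : N.IsPathFromTo l u v) (ha : N.arc v w) :
    N.IsPathFromTo (l ++ [w]) u w := by
  obtain ⟨h1, h2, h3⟩ := h
  refine ⟨?_, ?_, ?_⟩
  · simp only [List.Chain']; rw [List.isChain_append]
    refine ⟨h1, List.isChain_singleton _, ?_⟩
    intro x hx y hy
    rw [h3] at hx; cases hx
    simp at hy; subst hy; exact ha
  · rw [List.head?_append_of_ne_nil]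
    · exact h2
    · exact fun hnil => by simp [hnil] at h2
  · simp

lemma desc_to_path {u v : N.V} (h : N.Desc u v) : ∃ l, N.IsPathFromTo l u v := by
  induction h using Relation.ReflTransGen.head_induction_on with
  | refl => exact ⟨[v], path_singleton v⟩
  | head ha _ ih => obtain ⟨l, hl⟩ := ih; exact ⟨_ :: l, path_cons ha hl⟩

lemma path_desc {l : List N.V} {u v : N.V} (h : N.IsPathFromTo l u v) : N.Desc u v := by
  induction l generalizing u with
  | nil => exact absurd rfl (path_ne_nil h)
  | cons a l ih =>
    obtain ⟨h1, h2, h3⟩ := h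
    simp at h2; subst h2
    cases l with
    | nil => simp at h3; subst h3; exact Relation.ReflTransGen.refl
    | cons b l' =>
      simp only [List.Chain'] at h1; rw [List.isChain_cons_cons] at h1
      rw [List.getLast?_cons_cons] at h3
      exact Relation.ReflTransGen.head h1.1 (ih ⟨h1.2, rfl, h3⟩)

lemma path_mem_desc {l : List N.V} {u w : N.V} (h : N.IsPathFromTo l u w) {v : N.V}
    (hv : v ∈ l) : N.Desc u v ∧ N.Desc v w := by
  induction l generalizing u with
  | nil => exact absurd rfl (path_ne_nil h)
  | cons a l ih =>
    obtain ⟨h1, h2, h3⟩ := h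
    simp at h2; subst h2
    rcases List.mem_cons.1 hv with rfl | hv'
    · exact ⟨Relation.ReflTransGen.refl, path_desc ⟨h1, rfl, h3⟩⟩
    · have hlnil : l ≠ [] := by rintro rfl; simp at hv'
      obtain ⟨b, l', rfl⟩ := List.exists_cons_of_ne_nil hlnil
      simp only [List.Chain'] at h1; rw [List.isChain_cons_cons] at h1
      rw [List.getLast?_cons_cons] at h3
      have := ih ⟨h1.2, rfl, h3⟩ hv'
      exact ⟨Relation.ReflTransGen.head h1.1 this.1, this.2⟩

/-- split: a suffix path from any member -/
lemma path_split_s10 {l : List N.V} {u w : N.V} (h : N.IsPathFromTo l u w) {v : N.V}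
    (hv : v ∈ l) : ∃ l', N.IsPathFromTo l' v w ∧ l'.length ≤ l.length ∧
      (v ≠ u → l'.length < l.length) ∧ ∀ t ∈ l', t ∈ l := by
  induction l generalizing u with
  | nil => exact absurd rfl (path_ne_nil h)
  | cons a l ih =>
    obtain ⟨h1, h2, h3⟩ := h
    simp at h2; subst h2
    rcases List.mem_cons.1 hv with rfl | hv'
    · exact ⟨v :: l, ⟨h1, rfl, h3⟩, le_refl _, fun hne => absurd rfl hne, fun t ht => ht⟩
    · have hlnil : l ≠ [] := by rintro rfl; simp at hv'
      obtain ⟨b, l', rfl⟩ := List.exists_cons_of_ne_nil hlnil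
      simp only [List.Chain'] at h1; rw [List.isChain_cons_cons] at h1
      rw [List.getLast?_cons_cons] at h3
      obtain ⟨l2, hp, hle, _, hmem⟩ := ih ⟨h1.2, rfl, h3⟩ hv'
      exact ⟨l2, hp, le_trans hle (by simp), fun _ => lt_of_le_of_lt hle (by simp),
        fun t ht => List.mem_cons_of_mem _ (hmem t ht)⟩

/-- a member with no out-arcs must be the endpoint -/
lemma path_mem_sink {l : List N.V} {u w : N.V} (h : N.IsPathFromTo l u w) {v : N.V}
    (hv : v ∈ l) (hsink : ∀ c, ¬ N.arc v c) : v = w := by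
  induction l generalizing u with
  | nil => exact absurd rfl (path_ne_nil h)
  | cons a l ih =>
    obtain ⟨h1, h2, h3⟩ := h
    simp at h2; subst h2
    cases l with
    | nil =>
      simp at h3 hv
      exact hv.trans h3
    | cons b l' =>
      simp only [List.Chain'] at h1; rw [List.isChain_cons_cons] at h1
      rw [List.getLast?_cons_cons] at h3
      rcases List.mem_cons.1 hv with rfl | hv'
      · exact absurd h1.1 (hsink b)
      · exact ih ⟨h1.2, rfl, h3⟩ hv'

/-- last-but-one: a path with distinct endpoints passes a parent of the endpoint -/
lemma path_penult {l : List N.V} {u w : N.V} (h : N.IsPathFromTo l u w) (hne : u ≠ w) :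
    ∃ m, N.arc m w ∧ N.Desc u m ∧ m ∈ l := by
  induction l generalizing u with
  | nil => exact absurd rfl (path_ne_nil h)
  | cons a l ih =>
    obtain ⟨h1, h2, h3⟩ := h
    simp at h2; subst h2
    cases l with
    | nil => simp at h3; exact absurd h3 hne
    | cons b l' =>
      simp only [List.Chain'] at h1; rw [List.isChain_cons_cons] at h1
      rw [List.getLast?_cons_cons] at h3
      by_cases hbw : b = w
      · subst hbw; exact ⟨a, h1.1, Relation.ReflTransGen.refl, List.mem_cons_self⟩
      · obtain ⟨m, hm1, hm2, hm3⟩ := ih ⟨h1.2, rfl, h3⟩ hbw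
        exact ⟨m, hm1, Relation.ReflTransGen.head h1.1 hm2, List.mem_cons_of_mem _ hm3⟩


section WithHyps
variable (hac : N.Acyclic)
include hac

lemma desc_antisymm {u v : N.V} (h1 : N.Desc u v) (h2 : N.Desc v u) : u = v := by
  by_contra hne
  rcases h1.cases_head with rfl | ⟨c, hc, hcv⟩
  · exact hne rfl
  · exact hac u (Relation.TransGen.head' hc (hcv.trans h2))

lemma arc_no_desc {u v : N.V} (ha : N.arc u v) (hd : N.Desc v u) : False :=
  hac u (Relation.TransGen.head' ha hd)

lemma arc_ne {u v : N.V} (ha : N.arc u v) : u ≠ v := by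
  rintro rfl; exact arc_no_desc hac ha Relation.ReflTransGen.refl

end WithHyps

lemma desc_of_arc {u v : N.V} (ha : N.arc u v) : N.Desc u v :=
  Relation.ReflTransGen.single ha

section Degrees
variable [Finite N.V]

lemma parents_finite (v : N.V) : (N.parents v).Finite := Set.toFinite _
lemma children_finite (v : N.V) : (N.children v).Finite := Set.toFinite _

lemma no_child (v : N.V) (h : (N.children v).ncard = 0) : ∀ c, ¬ N.arc v c := by
  intro c hc
  have : (N.children v) = ∅ := (Set.ncard_eq_zero (children_finite v)).1 h
  exact absurd (this ▸ hc : c ∈ (∅ : Set N.V)) (Set.notMem_empty c)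

lemma no_parent (v : N.V) (h : (N.parents v).ncard = 0) : ∀ c, ¬ N.arc c v := by
  intro c hc
  have : (N.parents v) = ∅ := (Set.ncard_eq_zero (parents_finite v)).1 h
  exact absurd (this ▸ hc : c ∈ (∅ : Set N.V)) (Set.notMem_empty c)

lemma unique_parent {v : N.V} (h : (N.parents v).ncard = 1) :
    ∃ p, N.arc p v ∧ ∀ u, N.arc u v → u = p := by
  obtain ⟨p, hp⟩ := Set.ncard_eq_one.1 h
  refine ⟨p, ?_, fun u hu => ?_⟩
  · have : p ∈ N.parents v := hp ▸ rfl
    exact this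
  · have : u ∈ N.parents v := hu
    rwa [hp] at this

lemma two_children {v : N.V} (h : (N.children v).ncard = 2) :
    ∃ c1 c2, c1 ≠ c2 ∧ N.arc v c1 ∧ N.arc v c2 ∧ ∀ w, N.arc v w → w = c1 ∨ w = c2 := by
  obtain ⟨c1, c2, hne, hset⟩ := Set.ncard_eq_two.1 h
  refine ⟨c1, c2, hne, ?_, ?_, fun w hw => ?_⟩
  · show c1 ∈ N.children v
    rw [hset]; exact Set.mem_insert _ _
  · show c2 ∈ N.children v
    rw [hset]; exact Set.mem_insert_iff.2 (Or.inr rfl)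
  · have : w ∈ N.children v := hw
    rw [hset] at this
    exact this

lemma other_child {v c : N.V} (h : (N.children v).ncard = 2) (hc : N.arc v c) :
    ∃ d, d ≠ c ∧ N.arc v d ∧ ∀ w, N.arc v w → w = c ∨ w = d := by
  obtain ⟨c1, c2, hne, h1, h2, hall⟩ := two_children h
  rcases hall c hc with rfl | rfl
  · exact ⟨c2, fun e => hne e.symm, h2, fun w hw => hall w hw⟩
  · exact ⟨c1, hne, h1, fun w hw => (hall w hw).symm⟩

lemma two_parents {v : N.V} (h : (N.parents v).ncard = 2) :
    ∃ c1 c2, c1 ≠ c2 ∧ N.arc c1 v ∧ N.arc c2 v ∧ ∀ w, N.arc w v → w = c1 ∨ w = c2 := by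
  obtain ⟨c1, c2, hne, hset⟩ := Set.ncard_eq_two.1 h
  refine ⟨c1, c2, hne, ?_, ?_, fun w hw => ?_⟩
  · show c1 ∈ N.parents v
    rw [hset]; exact Set.mem_insert _ _
  · show c2 ∈ N.parents v
    rw [hset]; exact Set.mem_insert_iff.2 (Or.inr rfl)
  · have : w ∈ N.parents v := hw
    rw [hset] at this
    exact this

lemma other_parent {v c : N.V} (h : (N.parents v).ncard = 2) (hc : N.arc c v) :
    ∃ d, d ≠ c ∧ N.arc d v ∧ ∀ w, N.arc w v → w = c ∨ w = d := by
  obtain ⟨c1, c2, hne, h1, h2, hall⟩ := two_parents h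
  rcases hall c hc with rfl | rfl
  · exact ⟨c2, fun e => hne e.symm, h2, fun w hw => hall w hw⟩
  · exact ⟨c1, hne, h1, fun w hw => (hall w hw).symm⟩

lemma one_child {v : N.V} (h : (N.children v).ncard = 1) :
    ∃ c, N.arc v c ∧ ∀ w, N.arc v w → w = c := by
  obtain ⟨c, hc⟩ := Set.ncard_eq_one.1 h
  refine ⟨c, ?_, fun w hw => ?_⟩
  · have : c ∈ N.children v := hc ▸ rfl
    exact this
  · have : w ∈ N.children v := hw
    rwa [hc] at this

end Degrees

section Wf
variable (hwf : N.Wf)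
include hwf

lemma wf_finite : Finite N.V := hwf.1
lemma wf_acyclic : N.Acyclic := hwf.2.1

lemma wf_trans_wf : WellFounded (Relation.TransGen N.arc) := by
  have : Finite N.V := hwf.1
  have h1 : IsTrans N.V (Relation.TransGen N.arc) := ⟨fun _ _ _ => Relation.TransGen.trans⟩
  have h2 : IsIrrefl N.V (Relation.TransGen N.arc) := ⟨hwf.2.1⟩
  exact Finite.wellFounded_of_trans_of_irrefl _

lemma wf_trans_wf_flip : WellFounded (fun u v : N.V => Relation.TransGen N.arc v u) := by
  have : Finite N.V := hwf.1
  have h1 : IsTrans N.V (fun u v : N.V => Relation.TransGen N.arc v u) :=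
    ⟨fun _ _ _ h g => Relation.TransGen.trans g h⟩
  have h2 : IsIrrefl N.V (fun u v : N.V => Relation.TransGen N.arc v u) := ⟨hwf.2.1⟩
  exact Finite.wellFounded_of_trans_of_irrefl _

/-- every vertex has an in-arc unless it is the root -/
lemma has_parent {v : N.V} (hv : v ≠ N.root) : ∃ u, N.arc u v := by
  have hne : (N.parents v).ncard ≠ 0 := by
    rcases hwf.2.2.2.2.2.2 v with rfl | ⟨x, rfl⟩ | ht | hr
    · exact absurd rfl hv
    · rw [(hwf.2.2.2.2.2.1 x).1]; norm_num
    · rw [ht.1]; norm_num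
    · rw [hr.1]; norm_num
  obtain ⟨u, hu⟩ := Set.nonempty_of_ncard_ne_zero hne
  exact ⟨u, hu⟩

/-- every vertex is reachable from the root -/
lemma reach_from_root (v : N.V) : ∃ l, N.IsPathFromTo l N.root v := by
  have : Finite N.V := hwf.1
  induction v using (wf_trans_wf hwf).induction with
  | _ v ih =>
    by_cases hv : v = N.root
    · subst hv; exact ⟨[N.root], path_singleton _⟩
    · obtain ⟨u, hu⟩ := has_parent hwf hv
      obtain ⟨l, hl⟩ := ih u (Relation.TransGen.single hu)
      exact ⟨l ++ [v], path_snoc hl hu⟩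

lemma root_desc (v : N.V) : N.Desc N.root v := by
  obtain ⟨l, hl⟩ := reach_from_root hwf v
  exact path_desc hl

/-- every vertex has a path down to some leaf -/
lemma reach_leaf (v : N.V) : ∃ x l, N.IsPathFromTo l v (N.leaf x) := by
  have : Finite N.V := hwf.1
  induction v using (wf_trans_wf_flip hwf).induction with
  | _ v ih =>
    rcases hwf.2.2.2.2.2.2 v with hr | ⟨x, rfl⟩ | ht | hre
    · obtain ⟨c1, c2, -, h1, -, -⟩ := two_children (hr ▸ hwf.2.2.2.1)
      obtain ⟨x, l, hl⟩ := ih c1 (Relation.TransGen.single h1)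
      exact ⟨x, _, path_cons h1 hl⟩
    · exact ⟨x, [N.leaf x], path_singleton _⟩
    · obtain ⟨c1, c2, -, h1, -, -⟩ := two_children ht.2
      obtain ⟨x, l, hl⟩ := ih c1 (Relation.TransGen.single h1)
      exact ⟨x, _, path_cons h1 hl⟩
    · obtain ⟨c, h1, -⟩ := one_child hre.2
      obtain ⟨x, l, hl⟩ := ih c (Relation.TransGen.single h1)
      exact ⟨x, _, path_cons h1 hl⟩

lemma desc_penult {u w : N.V} (h : N.Desc u w) (hne : u ≠ w) :
    ∃ m, N.arc m w ∧ N.Desc u m := by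
  obtain ⟨l, hl⟩ := desc_to_path h
  obtain ⟨m, h1, h2, -⟩ := path_penult hl hne
  exact ⟨m, h1, h2⟩

lemma ne_root_of_arc {u v : N.V} (h : N.arc u v) : v ≠ N.root := by
  have : Finite N.V := hwf.1
  rintro rfl
  exact no_parent _ hwf.2.2.1 u h

lemma leaf_ne_of_child {v c : N.V} {x : X} (h : N.arc v c) : N.leaf x ≠ v := by
  have : Finite N.V := hwf.1
  rintro rfl
  exact no_child _ (hwf.2.2.2.2.2.1 x).2 c h

lemma leaf_no_child (x : X) : ∀ c, ¬ N.arc (N.leaf x) c := by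
  have : Finite N.V := hwf.1
  exact no_child _ (hwf.2.2.2.2.2.1 x).2

lemma leaf_eq_of_mem {l : List N.V} {u w : N.V} {x : X} (h : N.IsPathFromTo l u w)
    (hm : N.leaf x ∈ l) : N.leaf x = w :=
  path_mem_sink h hm (leaf_no_child hwf x)

/-- classification of a vertex having both a parent and a child -/
lemma tree_or_retic {v u c : N.V} (hp : N.arc u v) (hc : N.arc v c) :
    N.IsTreeVertex v ∨ N.IsRetic v := by
  have : Finite N.V := hwf.1
  rcases hwf.2.2.2.2.2.2 v with rfl | ⟨x, rfl⟩ | ht | hr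
  · exact absurd hp (no_parent _ hwf.2.2.1 u)
  · exact absurd hc (leaf_no_child hwf x c)
  · exact Or.inl ht
  · exact Or.inr hr

/-- a vertex with a child that is not a reticulation has out-degree 2 -/
lemma children_two_of_not_retic {v c : N.V} (hc : N.arc v c) (hnr : ¬ N.IsRetic v) :
    (N.children v).ncard = 2 := by
  have : Finite N.V := hwf.1
  rcases hwf.2.2.2.2.2.2 v with rfl | ⟨x, rfl⟩ | ht | hr
  · exact hwf.2.2.2.1
  · exact absurd hc (leaf_no_child hwf x c)
  · exact ht.2
  · exact absurd hr hnr

/-- branch point for incomparable vertices -/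
lemma branch_point {u v : N.V} (hu : ¬ N.Desc u v) (hv : ¬ N.Desc v u) :
    ∃ p l1 l2, N.IsPathFromTo l1 p u ∧ N.IsPathFromTo l2 p v ∧
      ∀ w, w ∈ l1 → w ∈ l2 → w = p := by
  have key : ∀ n (s : N.V) (l : List N.V), l.length ≤ n → N.IsPathFromTo l s u → N.Desc s v →
      ∃ p l1 l2, N.IsPathFromTo l1 p u ∧ N.IsPathFromTo l2 p v ∧
        ∀ w, w ∈ l1 → w ∈ l2 → w = p := by
    intro n
    induction n with
    | zero =>
      intro s l hlen hl _
      have := path_ne_nil hl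
      cases l
      · exact absurd rfl this
      · simp at hlen
    | succ n ih =>
      intro s l hlen hl hsv
      by_cases hbad : ∃ w ∈ l, w ≠ s ∧ N.Desc w v
      · obtain ⟨w, hw, hwne, hwv⟩ := hbad
        obtain ⟨l', hl', -, hlt, -⟩ := path_split_s10 hl hw
        have hlt' := hlt hwne
        exact ih w l' (by omega) hl' hwv
      · push_neg at hbad
        obtain ⟨l2, hl2⟩ := desc_to_path hsv
        refine ⟨s, l, l2, hl, hl2, fun w hw1 hw2 => ?_⟩
        by_contra hne
        exact hbad w hw1 hne (path_mem_desc hl2 hw2).2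
  obtain ⟨l, hl⟩ := reach_from_root hwf u
  exact key l.length N.root l le_rfl hl (root_desc hwf v)

end Wf

section Normal
variable (hwf : N.Wf) (htc : N.TreeChild) (hns : ¬ N.HasShortcut)

include hns in
lemma mk_shortcut {u v w : N.V} (h1 : N.arc u v) (h2 : N.IsRetic v) (h3 : N.arc u w)
    (h4 : w ≠ v) (h5 : N.Desc w v) : False :=
  hns ⟨u, v, h1, h2, w, h3, h4, h5⟩

include hwf hns in
/-- the two parents of a reticulation are incomparable -/
lemma retic_parents_incomp {m1 m2 r : N.V} (h1 : N.arc m1 r) (h2 : N.arc m2 r)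
    (hne : m1 ≠ m2) (hr : N.IsRetic r) : ¬ N.Desc m1 m2 := by
  intro hd
  obtain ⟨w, hw1, hw2⟩ := hd.cases_head.resolve_left hne
  have hwr : w ≠ r := by
    rintro rfl
    exact arc_no_desc hwf.2.1 h2 hw2
  exact mk_shortcut hns h1 hr hw1 hwr (hw2.trans (Relation.ReflTransGen.single h2))

include hwf htc in
/-- a parent of a reticulation has out-degree 2 -/
lemma parent_of_retic_two {u r : N.V} (h : N.arc u r) (hr : N.IsRetic r) :
    (N.children u).ncard = 2 := by
  have : Finite N.V := hwf.1
  refine children_two_of_not_retic hwf h (fun hur => ?_)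
  obtain ⟨c, hc, hcall⟩ := one_child hur.2
  obtain ⟨c', hc', hgood⟩ := htc u ⟨r, h⟩
  have e1 : r = c := hcall r h
  have e2 : c' = c := hcall c' hc'
  have e3 : r = c' := e1.trans e2.symm
  rw [← e3] at hgood
  rcases hgood with ht | hl
  · obtain ⟨-, h2⟩ := ht
    obtain ⟨-, h1⟩ := hr
    omega
  · obtain ⟨-, h2⟩ := hl
    obtain ⟨-, h1⟩ := hr
    omega

include hwf in
lemma path_pair {u v : N.V} (h : N.arc u v) : N.IsPathFromTo [u, v] u v :=
  path_cons h (path_singleton v)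

include hwf htc hns in
/-- Case I: if the parent of `a` is a strict ancestor of the parent of `b`,
then some triple `bc|a` is displayed. -/
lemma caseI {a b : X} {pa pb : N.V} (hab : a ≠ b)
    (hpaa : N.arc pa (N.leaf a)) (hpau : ∀ u, N.arc u (N.leaf a) → u = pa)
    (hpbb : N.arc pb (N.leaf b)) (hpbu : ∀ u, N.arc u (N.leaf b) → u = pb)
    (hd : N.Desc pa pb) (hnepp : pa ≠ pb) :
    ∃ c, c ≠ a ∧ c ≠ b ∧ N.Displays b c a := by
  have hfin : Finite N.V := hwf.1
  have hac := hwf.2.1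
  have hinj := hwf.2.2.2.2.1
  -- pb is a tree vertex or a reticulation
  obtain ⟨m, hmarc, hpam⟩ := desc_penult hwf hd hnepp
  rcases tree_or_retic hwf hmarc hpbb with htv | hrv
  · -- Case I.A : pb a tree vertex
    obtain ⟨d, hdne, hdarc, -⟩ := other_child htv.2 hpbb
    obtain ⟨c, lt, hlt⟩ := reach_leaf hwf d
    have hcb : c ≠ b := by
      rintro rfl
      by_cases hdb : d = N.leaf c
      · exact hdne hdb
      · obtain ⟨m', hm', hdm', -⟩ := path_penult hlt hdb
        rw [hpbu m' hm'] at hdm'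
        exact arc_no_desc hac hdarc hdm'
    have hca : c ≠ a := by
      rintro rfl
      by_cases hda : d = N.leaf c
      · rw [hda] at hdarc
        exact hnepp (hpau pb hdarc).symm
      · obtain ⟨m', hm', hdm', -⟩ := path_penult hlt hda
        rw [hpau m' hm'] at hdm'
        exact arc_no_desc hac hdarc (hdm'.trans hd)
    obtain ⟨l0, hl0⟩ := desc_to_path hd
    refine ⟨c, hca, hcb, fun e => hcb e.symm, hab.symm, hca, pa, pb,
      l0, [pb, N.leaf b], pb :: lt, [pa, N.leaf a], hnepp, hl0,
      path_pair hwf hpbb, path_cons hdarc hlt, path_pair hwf hpaa, ?_, ?_, ?_⟩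
    · -- lx ∩ ly ⊆ {pb}
      intro v hv hv2
      simp at hv
      rcases hv with rfl | rfl
      · rfl
      · rcases List.mem_cons.1 hv2 with h | h
        · exact absurd h (leaf_ne_of_child hwf hpbb)
        · exact absurd (hinj (leaf_eq_of_mem hwf hlt h)).symm hcb
    · -- l0 ∩ (lx ∪ ly) ⊆ {pb}
      intro v hv hv2
      rcases hv2 with h | h
      · simp at h
        rcases h with rfl | rfl
        · rfl
        · exact absurd (leaf_eq_of_mem hwf hl0 (by exact hv))
            (leaf_ne_of_child hwf hpbb)
      · rcases List.mem_cons.1 h with rfl | h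
        · rfl
        · exfalso
          have h1 : N.Desc d v := (path_mem_desc hlt h).1
          have h2 : N.Desc v pb := (path_mem_desc hl0 hv).2
          exact arc_no_desc hac hdarc (h1.trans h2)
    · -- lz ∩ (l0 ∪ lx ∪ ly) ⊆ {pa}
      intro v hv hv2
      simp at hv
      rcases hv with rfl | rfl
      · rfl
      · exfalso
        rcases hv2 with h | h | h
        · have h' := leaf_eq_of_mem hwf hl0 h
          exact leaf_no_child hwf a (N.leaf b) (by rw [h']; exact hpbb)
        · simp at h
          rcases h with h | h
          · exact leaf_no_child hwf a (N.leaf b) (by rw [h]; exact hpbb)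
          · exact hab (hinj h)
        · rcases List.mem_cons.1 h with h | h
          · exact leaf_no_child hwf a (N.leaf b) (by rw [h]; exact hpbb)
          · exact hca (hinj (leaf_eq_of_mem hwf hlt h)).symm
  · -- Case I.B : pb a reticulation
    obtain ⟨m2, hm2ne, hm2arc, -⟩ := other_parent hrv.1 hmarc
    -- pa ≠ m2 (else shortcut)
    have hpam2 : pa ≠ m2 := by
      intro e
      have hpamne : pa ≠ m := fun e2 => hm2ne (e.symm.trans e2)
      obtain ⟨w, hw1, hw2⟩ := hpam.cases_head.resolve_left hpamne
      have hwpb : w ≠ pb := by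
        rintro rfl
        exact arc_no_desc hac hmarc hw2
      exact mk_shortcut hns (show N.arc pa pb by rw [e]; exact hm2arc) hrv hw1 hwpb
        (hw2.trans (Relation.ReflTransGen.single hmarc))
    -- ¬ Desc m2 pa (else shortcut)
    have hm2pa : ¬ N.Desc m2 pa := by
      intro hdm
      have hm2pane : m2 ≠ pa := fun e => hpam2 e.symm
      obtain ⟨w, hw1, hw2⟩ := hdm.cases_head.resolve_left hm2pane
      have hwpb : w ≠ pb := by
        rintro rfl
        exact hnepp (desc_antisymm hac hd hw2)
      exact mk_shortcut hns hm2arc hrv hw1 hwpb (hw2.trans hd)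
    obtain ⟨d2, hd2ne, hd2arc, -⟩ :=
      other_child (parent_of_retic_two hwf htc hm2arc hrv) hm2arc
    obtain ⟨c, lt, hlt⟩ := reach_leaf hwf d2
    have hca : c ≠ a := by
      rintro rfl
      by_cases hda : d2 = N.leaf c
      · rw [hda] at hd2arc
        exact hpam2 (hpau m2 hd2arc).symm
      · obtain ⟨m', hm', hdm', -⟩ := path_penult hlt hda
        rw [hpau m' hm'] at hdm'
        exact mk_shortcut hns hm2arc hrv hd2arc hd2ne (hdm'.trans hd)
    have hcb : c ≠ b := by
      rintro rfl
      by_cases hdb : d2 = N.leaf c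
      · rw [hdb] at hd2arc
        have h' : m2 = pb := hpbu m2 hd2arc
        exact hac pb (Relation.TransGen.single (h' ▸ hm2arc))
      · obtain ⟨m', hm', hdm', -⟩ := path_penult hlt hdb
        rw [hpbu m' hm'] at hdm'
        exact mk_shortcut hns hm2arc hrv hd2arc hd2ne hdm'
    -- common membership facts
    have cond1 : ∀ v ∈ [m2, pb, N.leaf b], v ∈ m2 :: lt → v = m2 := by
      intro v hv hv2
      simp at hv
      rcases hv with rfl | rfl | rfl
      · rfl
      · exfalso
        rcases List.mem_cons.1 hv2 with h | h
        · exact arc_ne hac hm2arc h.symm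
        · exact mk_shortcut hns hm2arc hrv hd2arc hd2ne (path_mem_desc hlt h).1
      · exfalso
        rcases List.mem_cons.1 hv2 with h | h
        · exact leaf_no_child hwf b pb (by rw [h]; exact hm2arc)
        · exact hcb (hinj (leaf_eq_of_mem hwf hlt h)).symm
    have condmem : ∀ {ll : List N.V} {st : N.V}, N.IsPathFromTo ll st m2 →
        ∀ v ∈ ll, v ∈ [m2, pb, N.leaf b] ∨ v ∈ m2 :: lt → v = m2 := by
      intro ll st hll v hv hv2
      rcases hv2 with h | h
      · simp at h
        rcases h with rfl | rfl | rfl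
        · rfl
        · exact absurd (path_mem_desc hll hv).2
            (fun hh => arc_no_desc hac hm2arc hh)
        · exact absurd (leaf_eq_of_mem hwf hll hv)
            (leaf_ne_of_child hwf hm2arc)
      · rcases List.mem_cons.1 h with rfl | h
        · rfl
        · exfalso
          have h1 : N.Desc d2 v := (path_mem_desc hlt h).1
          have h2 : N.Desc v m2 := (path_mem_desc hll hv).2
          exact arc_no_desc hac hd2arc (h1.trans h2)
    have hlx : N.IsPathFromTo [m2, pb, N.leaf b] m2 (N.leaf b) :=
      path_cons hm2arc (path_pair hwf hpbb)
    have hly : N.IsPathFromTo (m2 :: lt) m2 (N.leaf c) := path_cons hd2arc hlt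
    by_cases hby : N.Desc pa m2
    · -- Case I.B.1
      obtain ⟨l0, hl0⟩ := desc_to_path hby
      refine ⟨c, hca, hcb, fun e => hcb e.symm, hab.symm, hca, pa, m2,
        l0, [m2, pb, N.leaf b], m2 :: lt, [pa, N.leaf a], hpam2, hl0,
        hlx, hly, path_pair hwf hpaa, cond1, condmem hl0, ?_⟩
      intro v hv hv2
      simp at hv
      rcases hv with rfl | rfl
      · rfl
      · exfalso
        rcases hv2 with h | h | h
        · exact leaf_ne_of_child hwf hm2arc (leaf_eq_of_mem hwf hl0 h)
        · simp at h
          rcases h with h | h | h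
          · exact leaf_ne_of_child hwf hm2arc h
          · exact leaf_no_child hwf a (N.leaf b) (by rw [h]; exact hpbb)
          · exact hab (hinj h)
        · rcases List.mem_cons.1 h with h | h
          · exact leaf_ne_of_child hwf hm2arc h
          · exact hca (hinj (leaf_eq_of_mem hwf hlt h)).symm
    · -- Case I.B.2 : pa and m2 incomparable
      obtain ⟨p, l1, l2, hl1, hl2, hdisj⟩ := branch_point hwf hby hm2pa
      have hpne : p ≠ m2 := by
        rintro rfl
        exact hm2pa (path_desc hl1)
      refine ⟨c, hca, hcb, fun e => hcb e.symm, hab.symm, hca, p, m2,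
        l2, [m2, pb, N.leaf b], m2 :: lt, l1 ++ [N.leaf a], hpne, hl2,
        hlx, hly, path_snoc hl1 hpaa, cond1, condmem hl2, ?_⟩
      intro v hv hv2
      rcases List.mem_append.1 hv with hv1 | hv1
      swap
      · -- v = leaf a
        simp at hv1
        subst hv1
        exfalso
        rcases hv2 with h | h | h
        · exact leaf_ne_of_child hwf hm2arc (leaf_eq_of_mem hwf hl2 h)
        · simp at h
          rcases h with h | h | h
          · exact leaf_ne_of_child hwf hm2arc h
          · exact leaf_no_child hwf a (N.leaf b) (by rw [h]; exact hpbb)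
          · exact hab (hinj h)
        · rcases List.mem_cons.1 h with h | h
          · exact leaf_ne_of_child hwf hm2arc h
          · exact hca (hinj (leaf_eq_of_mem hwf hlt h)).symm
      · rcases hv2 with h | h | h
        · exact hdisj v hv1 h
        · exfalso
          simp at h
          rcases h with rfl | rfl | rfl
          · exact hm2pa (path_mem_desc hl1 hv1).2
          · exact hnepp (desc_antisymm hac hd (path_mem_desc hl1 hv1).2)
          · have h' := leaf_eq_of_mem hwf hl1 hv1
            exact leaf_no_child hwf b (N.leaf a) (by rw [h']; exact hpaa)
        · exfalso
          rcases List.mem_cons.1 h with rfl | h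
          · exact hm2pa (path_mem_desc hl1 hv1).2
          · exact mk_shortcut hns hm2arc hrv hd2arc hd2ne
              (((path_mem_desc hlt h).1.trans (path_mem_desc hl1 hv1).2).trans hd)

include hwf htc hns in
/-- Case III.A : pa, pb incomparable and pa not a reticulation -/
lemma caseIIIA {a b : X} {pa pb : N.V} (hab : a ≠ b)
    (hpaa : N.arc pa (N.leaf a)) (hpau : ∀ u, N.arc u (N.leaf a) → u = pa)
    (hpbb : N.arc pb (N.leaf b)) (hpbu : ∀ u, N.arc u (N.leaf b) → u = pb)
    (h1 : ¬ N.Desc pa pb) (h2 : ¬ N.Desc pb pa) (hnr : ¬ N.IsRetic pa) :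
    ∃ c, c ≠ a ∧ c ≠ b ∧ N.Displays a c b := by
  have hfin : Finite N.V := hwf.1
  have hac := hwf.2.1
  have hinj := hwf.2.2.2.2.1
  obtain ⟨w1, hw1ne, hw1arc, -⟩ :=
    other_child (children_two_of_not_retic hwf hpaa hnr) hpaa
  obtain ⟨c, lt, hlt⟩ := reach_leaf hwf w1
  have hca : c ≠ a := by
    rintro rfl
    by_cases hda : w1 = N.leaf c
    · exact hw1ne hda
    · obtain ⟨m', hm', hdm', -⟩ := path_penult hlt hda
      rw [hpau m' hm'] at hdm'
      exact arc_no_desc hac hw1arc hdm'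
  have hcb : c ≠ b := by
    rintro rfl
    by_cases hdb : w1 = N.leaf c
    · rw [hdb] at hw1arc
      have e : pa = pb := hpbu pa hw1arc
      exact h1 (by rw [e]; exact Relation.ReflTransGen.refl)
    · obtain ⟨m', hm', hdm', -⟩ := path_penult hlt hdb
      rw [hpbu m' hm'] at hdm'
      exact h1 (Relation.ReflTransGen.head hw1arc hdm')
  obtain ⟨p, l1, l2, hl1, hl2, hdisj⟩ := branch_point hwf h1 h2
  have hpne : p ≠ pa := by
    rintro rfl
    exact h1 (path_desc hl2)
  refine ⟨c, hca, hcb, fun e => hca e.symm, hab, hcb, p, pa,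
    l1, [pa, N.leaf a], pa :: lt, l2 ++ [N.leaf b], hpne, hl1,
    path_pair hwf hpaa, path_cons hw1arc hlt, path_snoc hl2 hpbb, ?_, ?_, ?_⟩
  · intro v hv hv2
    simp at hv
    rcases hv with rfl | rfl
    · rfl
    · exfalso
      rcases List.mem_cons.1 hv2 with h | h
      · exact leaf_ne_of_child hwf hpaa h
      · exact hca (hinj (leaf_eq_of_mem hwf hlt h)).symm
  · intro v hv hv2
    rcases hv2 with h | h
    · simp at h
      rcases h with rfl | rfl
      · rfl
      · exact absurd (leaf_eq_of_mem hwf hl1 hv) (leaf_ne_of_child hwf hpaa)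
    · rcases List.mem_cons.1 h with rfl | h
      · rfl
      · exfalso
        exact arc_no_desc hac hw1arc
          ((path_mem_desc hlt h).1.trans (path_mem_desc hl1 hv).2)
  · intro v hv hv2
    rcases List.mem_append.1 hv with hv1 | hv1
    swap
    · simp at hv1
      subst hv1
      exfalso
      rcases hv2 with h | h | h
      · exact leaf_ne_of_child hwf hpaa (leaf_eq_of_mem hwf hl1 h)
      · simp at h
        rcases h with h | h
        · exact leaf_ne_of_child hwf hpaa h
        · exact hab (hinj h).symm
      · rcases List.mem_cons.1 h with h | h
        · exact leaf_ne_of_child hwf hpaa h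
        · exact hcb (hinj (leaf_eq_of_mem hwf hlt h)).symm
    · rcases hv2 with h | h | h
      · exact hdisj v h hv1
      · exfalso
        simp at h
        rcases h with rfl | rfl
        · exact h1 (path_mem_desc hl2 hv1).2
        · exact leaf_ne_of_child hwf hpbb (leaf_eq_of_mem hwf hl2 hv1)
      · exfalso
        rcases List.mem_cons.1 h with rfl | h
        · exact h1 (path_mem_desc hl2 hv1).2
        · exact h1 (Relation.ReflTransGen.head hw1arc
            ((path_mem_desc hlt h).1.trans (path_mem_desc hl2 hv1).2))

include hwf htc hns in
/-- Case III.B.2 : pa a reticulation with a parent u incomparable with pb -/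
lemma caseIIIB2 {a b : X} {pa pb u : N.V} (hab : a ≠ b)
    (hpaa : N.arc pa (N.leaf a)) (hpau : ∀ v, N.arc v (N.leaf a) → v = pa)
    (hpbb : N.arc pb (N.leaf b)) (hpbu : ∀ v, N.arc v (N.leaf b) → v = pb)
    (hndab : ¬ N.Desc pa pb) (hu : N.arc u pa) (hra : N.IsRetic pa)
    (h3 : ¬ N.Desc u pb) (h4 : ¬ N.Desc pb u) :
    ∃ c, c ≠ a ∧ c ≠ b ∧ N.Displays a c b := by
  have hfin : Finite N.V := hwf.1
  have hac := hwf.2.1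
  have hinj := hwf.2.2.2.2.1
  obtain ⟨d, hdne, hdarc, -⟩ :=
    other_child (parent_of_retic_two hwf htc hu hra) hu
  obtain ⟨c, lt, hlt⟩ := reach_leaf hwf d
  have hca : c ≠ a := by
    rintro rfl
    by_cases hda : d = N.leaf c
    · rw [hda] at hdarc
      have e : u = pa := hpau u hdarc
      exact hac pa (Relation.TransGen.single (e ▸ hu))
    · obtain ⟨m', hm', hdm', -⟩ := path_penult hlt hda
      rw [hpau m' hm'] at hdm'
      exact mk_shortcut hns hu hra hdarc hdne hdm'
  have hcb : c ≠ b := by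
    rintro rfl
    by_cases hdb : d = N.leaf c
    · rw [hdb] at hdarc
      have e : u = pb := hpbu u hdarc
      exact h4 (by rw [e]; exact Relation.ReflTransGen.refl)
    · obtain ⟨m', hm', hdm', -⟩ := path_penult hlt hdb
      rw [hpbu m' hm'] at hdm'
      exact h3 (Relation.ReflTransGen.head hdarc hdm')
  obtain ⟨p, l1, l2, hl1, hl2, hdisj⟩ := branch_point hwf h3 h4
  have hpne : p ≠ u := by
    rintro rfl
    exact h3 (path_desc hl2)
  refine ⟨c, hca, hcb, fun e => hca e.symm, hab, hcb, p, u,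
    l1, [u, pa, N.leaf a], u :: lt, l2 ++ [N.leaf b], hpne, hl1,
    path_cons hu (path_pair hwf hpaa), path_cons hdarc hlt,
    path_snoc hl2 hpbb, ?_, ?_, ?_⟩
  · intro v hv hv2
    simp at hv
    rcases hv with rfl | rfl | rfl
    · rfl
    · exfalso
      rcases List.mem_cons.1 hv2 with h | h
      · exact arc_ne hac hu h.symm
      · exact mk_shortcut hns hu hra hdarc hdne (path_mem_desc hlt h).1
    · exfalso
      rcases List.mem_cons.1 hv2 with h | h
      · exact leaf_ne_of_child hwf hu h
      · exact hca (hinj (leaf_eq_of_mem hwf hlt h)).symm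
  · intro v hv hv2
    rcases hv2 with h | h
    · simp at h
      rcases h with rfl | rfl | rfl
      · rfl
      · exact absurd (path_mem_desc hl1 hv).2 (fun hh => arc_no_desc hac hu hh)
      · exact absurd (leaf_eq_of_mem hwf hl1 hv) (leaf_ne_of_child hwf hu)
    · rcases List.mem_cons.1 h with rfl | h
      · rfl
      · exfalso
        exact arc_no_desc hac hdarc
          ((path_mem_desc hlt h).1.trans (path_mem_desc hl1 hv).2)
  · intro v hv hv2
    rcases List.mem_append.1 hv with hv1 | hv1
    swap
    · simp at hv1
      subst hv1
      exfalso
      rcases hv2 with h | h | h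
      · exact leaf_ne_of_child hwf hu (leaf_eq_of_mem hwf hl1 h)
      · simp at h
        rcases h with h | h | h
        · exact leaf_ne_of_child hwf hu h
        · exact leaf_ne_of_child hwf hpaa h
        · exact hab (hinj h).symm
      · rcases List.mem_cons.1 h with h | h
        · exact leaf_ne_of_child hwf hu h
        · exact hcb (hinj (leaf_eq_of_mem hwf hlt h)).symm
    · rcases hv2 with h | h | h
      · exact hdisj v h hv1
      · exfalso
        simp at h
        rcases h with rfl | rfl | rfl
        · exact h3 (path_mem_desc hl2 hv1).2
        · exact hndab (path_mem_desc hl2 hv1).2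
        · exact leaf_ne_of_child hwf hpbb (leaf_eq_of_mem hwf hl2 hv1)
      · exfalso
        rcases List.mem_cons.1 h with rfl | h
        · exact h3 (path_mem_desc hl2 hv1).2
        · exact h3 (Relation.ReflTransGen.head hdarc
            ((path_mem_desc hlt h).1.trans (path_mem_desc hl2 hv1).2))

include hwf htc hns in
/-- Case III.B.3 : pa, pb incomparable, a parent u1 of pa is above pb, pb with
out-degree two -/
lemma caseIIIB3 {a b : X} {pa pb u1 : N.V} (hab : a ≠ b)
    (hpaa : N.arc pa (N.leaf a)) (hpau : ∀ v, N.arc v (N.leaf a) → v = pa)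
    (hpbb : N.arc pb (N.leaf b)) (hpbu : ∀ v, N.arc v (N.leaf b) → v = pb)
    (hnab : ¬ N.Desc pa pb) (hnba : ¬ N.Desc pb pa)
    (hu1 : N.arc u1 pa) (hd1 : N.Desc u1 pb) (hpb2 : (N.children pb).ncard = 2) :
    ∃ c, c ≠ a ∧ c ≠ b ∧ N.Displays b c a := by
  have hfin : Finite N.V := hwf.1
  have hac := hwf.2.1
  have hinj := hwf.2.2.2.2.1
  obtain ⟨e, hene, hearc, -⟩ := other_child hpb2 hpbb
  obtain ⟨c, lt, hlt⟩ := reach_leaf hwf e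
  have hcb : c ≠ b := by
    rintro rfl
    by_cases hdb : e = N.leaf c
    · exact hene hdb
    · obtain ⟨m', hm', hdm', -⟩ := path_penult hlt hdb
      rw [hpbu m' hm'] at hdm'
      exact arc_no_desc hac hearc hdm'
  have hca : c ≠ a := by
    rintro rfl
    by_cases hda : e = N.leaf c
    · rw [hda] at hearc
      have e' : pb = pa := hpau pb hearc
      exact hnba (by rw [e']; exact Relation.ReflTransGen.refl)
    · obtain ⟨m', hm', hdm', -⟩ := path_penult hlt hda
      rw [hpau m' hm'] at hdm'
      exact hnba (Relation.ReflTransGen.head hearc hdm')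
  have hqne : u1 ≠ pb := by
    rintro rfl
    exact hnba (desc_of_arc hu1)
  obtain ⟨l0, hl0⟩ := desc_to_path hd1
  refine ⟨c, hca, hcb, fun e => hcb e.symm, hab.symm, hca, u1, pb,
    l0, [pb, N.leaf b], pb :: lt, [u1, pa, N.leaf a], hqne, hl0,
    path_pair hwf hpbb, path_cons hearc hlt,
    path_cons hu1 (path_pair hwf hpaa), ?_, ?_, ?_⟩
  · intro v hv hv2
    simp at hv
    rcases hv with rfl | rfl
    · rfl
    · exfalso
      rcases List.mem_cons.1 hv2 with h | h
      · exact leaf_ne_of_child hwf hpbb h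
      · exact hcb (hinj (leaf_eq_of_mem hwf hlt h)).symm
  · intro v hv hv2
    rcases hv2 with h | h
    · simp at h
      rcases h with rfl | rfl
      · rfl
      · exact absurd (leaf_eq_of_mem hwf hl0 hv) (leaf_ne_of_child hwf hpbb)
    · rcases List.mem_cons.1 h with rfl | h
      · rfl
      · exfalso
        exact arc_no_desc hac hearc
          ((path_mem_desc hlt h).1.trans (path_mem_desc hl0 hv).2)
  · intro v hv hv2
    simp at hv
    rcases hv with rfl | rfl | rfl
    · rfl
    · exfalso
      rcases hv2 with h | h | h
      · exact hnab (path_mem_desc hl0 h).2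
      · simp at h
        rcases h with rfl | h
        · exact hnab Relation.ReflTransGen.refl
        · exact leaf_ne_of_child hwf hpaa h.symm
      · rcases List.mem_cons.1 h with rfl | h
        · exact hnab Relation.ReflTransGen.refl
        · exact hnba (Relation.ReflTransGen.head hearc (path_mem_desc hlt h).1)
    · exfalso
      rcases hv2 with h | h | h
      · exact leaf_ne_of_child hwf hpbb (leaf_eq_of_mem hwf hl0 h)
      · simp at h
        rcases h with h | h
        · exact leaf_ne_of_child hwf hpbb h
        · exact hab (hinj h)
      · rcases List.mem_cons.1 h with h | h
        · exact leaf_ne_of_child hwf hpbb h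
        · exact hca (hinj (leaf_eq_of_mem hwf hlt h)).symm

lemma retic_not_tree {v : N.V} (hr : N.IsRetic v) : ¬ N.IsTreeVertex v := by
  intro ht
  obtain ⟨-, h1⟩ := hr
  obtain ⟨-, h2⟩ := ht
  omega

lemma retic_not_leaf {v : N.V} (hr : N.IsRetic v) : ¬ N.IsLeafVertex v := by
  intro ht
  obtain ⟨-, h1⟩ := hr
  obtain ⟨-, h2⟩ := ht
  omega

include hwf htc hns in
/-- the final impossible configuration -/
lemma contraCase {pa pb u1 u2 : N.V} (hra : N.IsRetic pa) (hrb : N.IsRetic pb)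
    (hu1 : N.arc u1 pa) (hu2 : N.arc u2 pa) (hu12 : u1 ≠ u2)
    (hallu : ∀ w, N.arc w pa → w = u1 ∨ w = u2)
    (hd1 : N.Desc u1 pb)
    (hv : ∀ v, N.arc v pb → N.Desc v pa)
    (hnab : ¬ N.Desc pa pb) (hnba : ¬ N.Desc pb pa) : False := by
  have hfin : Finite N.V := hwf.1
  have hac := hwf.2.1
  have hu1pb : u1 ≠ pb := by
    rintro rfl
    exact hnba (desc_of_arc hu1)
  obtain ⟨m, hm, hu1m⟩ := desc_penult hwf hd1 hu1pb
  have hmd : N.Desc m pa := hv m hm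
  have hmpa : m ≠ pa := fun e => hnab (by rw [← e]; exact desc_of_arc hm)
  obtain ⟨m', hm', hmm'⟩ := desc_penult hwf hmd hmpa
  rcases hallu m' hm' with e' | e'
  · rw [e'] at hmm'
    have e : u1 = m := desc_antisymm hac hu1m hmm'
    rw [← e] at hm
    -- u1 has exactly two children pa and pb, both reticulations
    obtain ⟨cc, hcc, hgood⟩ := htc u1 ⟨pa, hu1⟩
    obtain ⟨c1, c2, hne, h1, h2, hallc⟩ :=
      two_children (parent_of_retic_two hwf htc hu1 hra)
    have hpane : pa ≠ pb := fun e => hnab (e ▸ Relation.ReflTransGen.refl)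
    have hccab : cc = pa ∨ cc = pb := by
      rcases hallc pa hu1 with e1 | e1 <;> rcases hallc pb hm with e2 | e2 <;>
        rcases hallc cc hcc with e3 | e3 <;>
        first
          | (exact absurd (e1.trans e2.symm) hpane)
          | (exact Or.inl (e3.trans e1.symm))
          | (exact Or.inr (e3.trans e2.symm))
    rcases hccab with rfl | rfl
    · rcases hgood with h | h
      · exact retic_not_tree hra h
      · exact retic_not_leaf hra h
    · rcases hgood with h | h
      · exact retic_not_tree hrb h
      · exact retic_not_leaf hrb h
  · rw [e'] at hmm'
    exact retic_parents_incomp hwf hns hu1 hu2 hu12 hra (hu1m.trans hmm')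

include hwf htc hns in
/-- main lemma: if `a` and `b` do not form a cherry, a violating triple exists -/
lemma bad_triple {a b : X} {pa pb : N.V} (hab : a ≠ b)
    (hpaa : N.arc pa (N.leaf a)) (hpau : ∀ v, N.arc v (N.leaf a) → v = pa)
    (hpbb : N.arc pb (N.leaf b)) (hpbu : ∀ v, N.arc v (N.leaf b) → v = pb)
    (hnepp : pa ≠ pb) :
    ∃ c, c ≠ a ∧ c ≠ b ∧ (N.Displays a c b ∨ N.Displays b c a) := by
  have hfin : Finite N.V := hwf.1
  by_cases h1 : N.Desc pa pb
  · obtain ⟨c, h, h', hd⟩ := caseI hwf htc hns hab hpaa hpau hpbb hpbu h1 hnepp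
    exact ⟨c, h, h', Or.inr hd⟩
  by_cases h2 : N.Desc pb pa
  · obtain ⟨c, h', h, hd⟩ :=
      caseI hwf htc hns hab.symm hpbb hpbu hpaa hpau h2 (Ne.symm hnepp)
    exact ⟨c, h, h', Or.inl hd⟩
  by_cases hra : N.IsRetic pa
  swap
  · obtain ⟨c, h, h', hd⟩ := caseIIIA hwf htc hns hab hpaa hpau hpbb hpbu h1 h2 hra
    exact ⟨c, h, h', Or.inl hd⟩
  obtain ⟨u1, u2, hu12, hu1, hu2, hallu⟩ := two_parents hra.1
  have hnd1 : ¬ N.Desc pb u1 := fun h => h2 (h.trans (desc_of_arc hu1))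
  have hnd2 : ¬ N.Desc pb u2 := fun h => h2 (h.trans (desc_of_arc hu2))
  by_cases hd1 : N.Desc u1 pb
  swap
  · obtain ⟨c, h, h', hd⟩ :=
      caseIIIB2 hwf htc hns hab hpaa hpau hpbb hpbu h1 hu1 hra hd1 hnd1
    exact ⟨c, h, h', Or.inl hd⟩
  by_cases hd2 : N.Desc u2 pb
  swap
  · obtain ⟨c, h, h', hd⟩ :=
      caseIIIB2 hwf htc hns hab hpaa hpau hpbb hpbu h1 hu2 hra hd2 hnd2
    exact ⟨c, h, h', Or.inl hd⟩
  by_cases hrb : N.IsRetic pb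
  swap
  · obtain ⟨c, h, h', hd⟩ := caseIIIB3 hwf htc hns hab hpaa hpau hpbb hpbu h1 h2
      hu1 hd1 (children_two_of_not_retic hwf hpbb hrb)
    exact ⟨c, h, h', Or.inr hd⟩
  obtain ⟨v1, v2, hv12, hv1, hv2, hallv⟩ := two_parents hrb.1
  have hnd1' : ¬ N.Desc pa v1 := fun h => h1 (h.trans (desc_of_arc hv1))
  have hnd2' : ¬ N.Desc pa v2 := fun h => h1 (h.trans (desc_of_arc hv2))
  by_cases he1 : N.Desc v1 pa
  swap
  · obtain ⟨c, h', h, hd⟩ :=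
      caseIIIB2 hwf htc hns hab.symm hpbb hpbu hpaa hpau h2 hv1 hrb he1 hnd1'
    exact ⟨c, h, h', Or.inr hd⟩
  by_cases he2 : N.Desc v2 pa
  swap
  · obtain ⟨c, h', h, hd⟩ :=
      caseIIIB2 hwf htc hns hab.symm hpbb hpbu hpaa hpau h2 hv2 hrb he2 hnd2'
    exact ⟨c, h, h', Or.inr hd⟩
  exact absurd (contraCase hwf htc hns hra hrb hu1 hu2 hu12 hallu hd1
    (fun v hv => by rcases hallv v hv with rfl | rfl; exacts [he1, he2]) h1 h2) id

include hwf in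
/-- forward core: if `{a,b}` is a cherry then no triple `ay|b` is displayed -/
lemma cherry_forward_core {a b : X} {pp : N.V} (hab : a ≠ b)
    (hpa : N.arc pp (N.leaf a)) (hpb : N.arc pp (N.leaf b))
    {y : X} (h : N.Displays a y b) : False := by
  have hfin : Finite N.V := hwf.1
  have hac := hwf.2.1
  have hinj := hwf.2.2.2.2.1
  obtain ⟨hxy, -, hyz, p', q, l0, lx, ly, lz, hpq, hl0, hlx, hly, hlz, c1, c2, c3⟩ := h
  have huniq_a : ∀ m, N.arc m (N.leaf a) → m = pp := by
    obtain ⟨p0, -, hall⟩ := unique_parent (hwf.2.2.2.2.2.1 a).1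
    intro m hm; rw [hall m hm, hall pp hpa]
  have huniq_b : ∀ m, N.arc m (N.leaf b) → m = pp := by
    obtain ⟨p0, -, hall⟩ := unique_parent (hwf.2.2.2.2.2.1 b).1
    intro m hm; rw [hall m hm, hall pp hpb]
  have hqa : q ≠ N.leaf a := by
    intro e
    have : N.leaf a ∈ ly := by rw [← e]; exact path_head_mem hly
    exact hxy (hinj (leaf_eq_of_mem hwf hly this))
  have hpa_mem : pp ∈ lx := by
    obtain ⟨m, hm, -, hmem⟩ := path_penult hlx hqa
    rw [huniq_a m hm] at hmem
    exact hmem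
  have hp'b : p' ≠ N.leaf b := by
    intro e
    rcases (path_desc hl0).cases_head with e' | ⟨w, hw, -⟩
    · exact hpq e'
    · rw [e] at hw
      exact leaf_no_child hwf b w hw
  have hpb_mem : pp ∈ lz := by
    obtain ⟨m, hm, -, hmem⟩ := path_penult hlz hp'b
    rw [huniq_b m hm] at hmem
    exact hmem
  have hpp' : pp = p' := c3 pp hpb_mem (Or.inr (Or.inl hpa_mem))
  subst hpp'
  -- the two children of pp are the leaves a and b
  have hp2 : (N.children pp).ncard = 2 := by
    refine children_two_of_not_retic hwf hpa (fun hr => ?_)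
    obtain ⟨cc, -, hallc⟩ := one_child hr.2
    exact hab (hinj ((hallc _ hpa).trans (hallc _ hpb).symm))
  obtain ⟨c1', c2', hne12, hc1, hc2, hallc⟩ := two_children hp2
  have hchild : ∀ w, N.arc pp w → w = N.leaf a ∨ w = N.leaf b := by
    intro w hw
    have hlab : N.leaf a ≠ N.leaf b := fun e => hab (hinj e)
    rcases hallc _ hpa with e1 | e1 <;> rcases hallc _ hpb with e2 | e2 <;>
      rcases hallc w hw with e3 | e3 <;>
      first
        | (exact absurd (e1.trans e2.symm) hlab)
        | (exact Or.inl (e3.trans e1.symm))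
        | (exact Or.inr (e3.trans e2.symm))
  obtain ⟨w, hw, hwq⟩ := (path_desc hl0).cases_head.resolve_left hpq
  have hleafq : ∀ x : X, N.Desc (N.leaf x) q → N.leaf x = q := by
    intro x hx
    rcases hx.cases_head with e | ⟨w', hw', -⟩
    · exact e
    · exact absurd hw' (leaf_no_child hwf x w')
  rcases hchild w hw with rfl | rfl
  · exact hqa (hleafq a hwq).symm
  · have hqb : N.leaf b = q := hleafq b hwq
    have hmem0 : N.leaf b ∈ l0 := by rw [hqb]; exact path_last_mem hl0
    have hmemz : N.leaf b ∈ lz := path_last_mem hlz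
    have : N.leaf b = pp := c3 _ hmemz (Or.inl hmem0)
    rw [this] at hpb
    exact hac pp (Relation.TransGen.single hpb)

lemma displays_swap {x y z : X} (h : N.Displays x y z) : N.Displays y x z := by
  obtain ⟨h1, h2, h3, p, q, l0, lx, ly, lz, hpq, hl0, hlx, hly, hlz, c1, c2, c3⟩ := h
  exact ⟨h1.symm, h3, h2, p, q, l0, ly, lx, lz, hpq, hl0, hly, hlx, hlz,
    fun v hv hv2 => c1 v hv2 hv, fun v hv hv2 => c2 v hv hv2.symm,
    fun v hv hv2 => c3 v hv (by tauto)⟩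

end Normal

end Network

/-- Cherry recognition: in a binary normal network `N` on `X`, distinct leaves
`a, b` form a cherry if and only if every rooted triple `xy|z` displayed by `N`
with `a, b ∈ {x,y,z}` satisfies `{a,b} = {x,y}`. -/
theorem cherry_characterisation {X : Type} (N : Network X)
    (h : N.IsBinaryPhylo) (hn : N.IsNormal) (a b : X) (hab : a ≠ b) :
    N.Cherry a b ↔
      ∀ x y z : X, N.Displays x y z →
        a ∈ ({x, y, z} : Set X) → b ∈ ({x, y, z} : Set X) →
        ({a, b} : Set X) = ({x, y} : Set X) := by
  rcases h with hwf | hdeg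
  swap
  · obtain ⟨-, -, ⟨x0, -, hx0⟩, -⟩ := hdeg
    exact absurd ((hx0 a trivial).trans (hx0 b trivial).symm) hab
  obtain ⟨htc, hns⟩ := hn
  have hfin : Finite N.V := hwf.1
  constructor
  · rintro ⟨-, pp, hpa, hpb⟩ x y z hdisp hamem hbmem
    simp only [Set.mem_insert_iff, Set.mem_singleton_iff] at hamem hbmem
    have core1 : ∀ y', N.Displays a y' b → False :=
      fun _ hd => Network.cherry_forward_core hwf hab hpa hpb hd
    have core2 : ∀ y', N.Displays b y' a → False :=
      fun _ hd => Network.cherry_forward_core hwf hab.symm hpb hpa hd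
    rcases hamem with ha | ha | ha <;> rcases hbmem with hb | hb | hb
    · exact absurd (ha.trans hb.symm) hab
    · rw [ha, hb]
    · exact (core1 y (by rw [ha, hb]; exact hdisp)).elim
    · rw [ha, hb]; exact Set.pair_comm y x
    · exact absurd (ha.trans hb.symm) hab
    · exact (core1 x (by rw [ha, hb]; exact Network.displays_swap hdisp)).elim
    · exact (core2 y (by rw [ha, hb]; exact hdisp)).elim
    · exact (core2 x (by rw [ha, hb]; exact Network.displays_swap hdisp)).elim
    · exact absurd (ha.trans hb.symm) hab
  · intro H
    by_contra hnc
    obtain ⟨pa, hpaa, hpau⟩ := Network.unique_parent (hwf.2.2.2.2.2.1 a).1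
    obtain ⟨pb, hpbb, hpbu⟩ := Network.unique_parent (hwf.2.2.2.2.2.1 b).1
    have hnepp : pa ≠ pb := by
      rintro rfl
      exact hnc ⟨hab, pa, hpaa, hpbb⟩
    obtain ⟨c, hca, hcb, hd⟩ :=
      Network.bad_triple hwf htc hns hab hpaa hpau hpbb hpbu hnepp
    rcases hd with hd | hd
    · have h' := H a c b hd (by simp) (by simp)
      have hb : b ∈ ({a, c} : Set X) := by rw [← h']; simp
      simp only [Set.mem_insert_iff, Set.mem_singleton_iff] at hb
      rcases hb with e | e
      · exact hab e.symm
      · exact hcb e.symm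
    · have h' := H b c a hd (by simp) (by simp)
      have ha : a ∈ ({b, c} : Set X) := by rw [← h']; simp
      simp only [Set.mem_insert_iff, Set.mem_singleton_iff] at ha
      rcases ha with e | e
      · exact hab e
      · exact hca e.symm
end
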